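/- arXiv:0704.3636 — 6 statements merged into one kernel-verified Lean document; each statement's English description precedes it below -/
import Mathlib

section
/- For every x ∈ ℝ, the function s ↦ q(s)² is integrable on [x, ∞), and ∫_x^∞ q(s)² ds = (q'(x))² − x·(q(x))² − (q(x))⁴. -/
open MeasureTheory Filter Real Topology

/-- Formula (1.7): the function `R(x) = ∫_x^∞ q(s)² ds` for the Hastings–McLeod
solution `q` of Painlevé II admits the local expression
`R(x) = q'(x)² - x q(x)² - q(x)⁴`. -/
theorem R_local_expression
    (q : ℝ → ℝ)
    (hq1 : Differentiable ℝ q)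
    (hq2 : Differentiable ℝ (deriv q))
    (hPII : ∀ x : ℝ, deriv (deriv q) x = 2 * (q x) ^ 3 + x * q x)
    (hasymp : Tendsto
      (fun x : ℝ => q x * (2 * Real.sqrt π * x ^ ((1 : ℝ) / 4) *
        Real.exp ((2 / 3) * x ^ ((3 : ℝ) / 2))))
      atTop (nhds 1))
    (x : ℝ) :
    IntegrableOn (fun s => (q s) ^ 2) (Set.Ici x) ∧
    ∫ s in Set.Ici x, (q s) ^ 2 = (deriv q x) ^ 2 - x * (q x) ^ 2 - (q x) ^ 4 := by
  classical
  set A : ℝ → ℝ := fun y => 2 * Real.sqrt π * y ^ ((1 : ℝ) / 4) *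
      Real.exp ((2 / 3) * y ^ ((3 : ℝ) / 2)) with hA
  -- basic bound : for y ≥ 1, exp((2/3) y) ≤ A y
  have hAge : ∀ y : ℝ, 1 ≤ y → Real.exp ((2/3) * y) ≤ A y := by
    intro y hy
    have h1 : (1:ℝ) ≤ 2 * Real.sqrt π := by
      have : (1:ℝ) ≤ Real.sqrt π := by
        rw [show (1:ℝ) = Real.sqrt 1 by simp]
        exact Real.sqrt_le_sqrt (by nlinarith [Real.pi_gt_three])
      linarith
    have h2 : (1:ℝ) ≤ y ^ ((1:ℝ)/4) := Real.one_le_rpow hy (by norm_num)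
    have h3 : Real.exp ((2/3) * y) ≤ Real.exp ((2/3) * y ^ ((3:ℝ)/2)) := by
      apply Real.exp_le_exp.2
      have h := Real.rpow_le_rpow_of_exponent_le hy (by norm_num : (1:ℝ) ≤ (3:ℝ)/2)
      rw [Real.rpow_one] at h
      linarith
    have h12 : 1 ≤ 2 * Real.sqrt π * y ^ ((1:ℝ)/4) := by nlinarith
    calc Real.exp ((2/3) * y) ≤ Real.exp ((2/3) * y ^ ((3:ℝ)/2)) := h3
      _ = 1 * Real.exp ((2/3) * y ^ ((3:ℝ)/2)) := (one_mul _).symm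
      _ ≤ 2 * Real.sqrt π * y ^ ((1:ℝ)/4) * Real.exp ((2/3) * y ^ ((3:ℝ)/2)) :=
          mul_le_mul_of_nonneg_right h12 (Real.exp_pos _).le
      _ = A y := rfl
  have hApos : ∀ y : ℝ, 1 ≤ y → 0 < A y :=
    fun y hy => lt_of_lt_of_le (Real.exp_pos _) (hAge y hy)
  -- y^s / A y → 0 for any real s
  have hpow : ∀ s : ℝ, Tendsto (fun y : ℝ => y ^ s * (A y)⁻¹) atTop (𝓝 0) := by
    intro s
    have hmain : Tendsto (fun y : ℝ => y ^ s * Real.exp (-(2/3) * y)) atTop (𝓝 0) :=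
      tendsto_rpow_mul_exp_neg_mul_atTop_nhds_zero s (2/3) (by norm_num)
    refine tendsto_of_tendsto_of_tendsto_of_le_of_le' tendsto_const_nhds hmain ?_ ?_
    · filter_upwards [eventually_ge_atTop (1:ℝ)] with y hy
      have hAy := hApos y hy
      have hys : 0 ≤ y ^ s := Real.rpow_nonneg (by linarith) s
      positivity
    · filter_upwards [eventually_ge_atTop (1:ℝ)] with y hy
      have hAy := hApos y hy
      have hys : 0 ≤ y ^ s := Real.rpow_nonneg (by linarith) s
      have hinv : (A y)⁻¹ ≤ Real.exp (-(2/3) * y) := by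
        rw [show -(2/3 : ℝ) * y = -((2/3) * y) by ring, Real.exp_neg]
        exact inv_anti₀ (Real.exp_pos _) (hAge y hy)
      exact mul_le_mul_of_nonneg_left hinv hys
  -- q → 0
  have hq0 : Tendsto q atTop (𝓝 0) := by
    have h1 : Tendsto (fun y => q y * A y * (A y)⁻¹) atTop (𝓝 0) := by
      have h0 : Tendsto (fun y : ℝ => (A y)⁻¹) atTop (𝓝 0) := by
        have := hpow 0
        refine this.congr' ?_
        filter_upwards [eventually_ge_atTop (1:ℝ)] with y hy
        rw [Real.rpow_zero, one_mul]
      have h1 := hasymp.mul h0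
      rwa [mul_zero] at h1
    refine h1.congr' ?_
    filter_upwards [eventually_ge_atTop (1:ℝ)] with y hy
    show q y * A y * (A y)⁻¹ = q y
    field_simp [(hApos y hy).ne']
  -- y * q y → 0
  have hxq : Tendsto (fun y : ℝ => y * q y) atTop (𝓝 0) := by
    have h1 := hasymp.mul (hpow 1)
    rw [mul_zero] at h1
    refine h1.congr' ?_
    filter_upwards [eventually_ge_atTop (1:ℝ)] with y hy
    show q y * A y * (y ^ (1:ℝ) * (A y)⁻¹) = y * q y
    rw [Real.rpow_one]
    field_simp [(hApos y hy).ne']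
  -- q'' → 0
  have hq2c : Continuous (deriv (deriv q)) := by
    have : deriv (deriv q) = fun y => 2 * (q y) ^ 3 + y * q y := funext hPII
    rw [this]
    exact ((continuous_const.mul ((hq1.continuous.pow 3))).add
      (continuous_id.mul hq1.continuous))
  have hq'' : Tendsto (deriv (deriv q)) atTop (𝓝 0) := by
    have h1 : Tendsto (fun y => 2 * (q y) ^ 3 + y * q y) atTop (𝓝 0) := by
      have := ((hq0.pow 3).const_mul (2:ℝ)).add hxq
      simpa using this
    exact h1.congr (fun y => (hPII y).symm)
  -- q' → 0 via mean value theorem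
  have hq' : Tendsto (deriv q) atTop (𝓝 0) := by
    rw [Metric.tendsto_atTop]
    intro ε hε
    rw [Metric.tendsto_atTop] at hq0 hq''
    obtain ⟨N₁, hN₁⟩ := hq0 (ε/4) (by linarith)
    obtain ⟨N₂, hN₂⟩ := hq'' (ε/4) (by linarith)
    refine ⟨max N₁ N₂, fun y hy => ?_⟩
    have hyN₁ : N₁ ≤ y := le_trans (le_max_left _ _) hy
    have hyN₂ : N₂ ≤ y := le_trans (le_max_right _ _) hy
    -- MVT on [y, y+1]
    obtain ⟨c, hc, hcq⟩ := exists_hasDerivAt_eq_slope q (deriv q) (by linarith : y < y + 1)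
      (hq1.continuous.continuousOn) (fun t _ => (hq1 t).hasDerivAt)
    -- FTC between y and c
    have hftc : ∫ t in y..c, deriv (deriv q) t = deriv q c - deriv q y := by
      apply intervalIntegral.integral_deriv_eq_sub (fun t _ => hq2 t)
      exact hq2c.intervalIntegrable y c
    have hbound : |∫ t in y..c, deriv (deriv q) t| ≤ (ε/4) * |c - y| := by
      have h := intervalIntegral.norm_integral_le_of_norm_le_const (C := ε/4)
        (f := deriv (deriv q)) (a := y) (b := c) ?_
      · simpa [Real.norm_eq_abs] using h
      · intro t ht
        rw [Set.uIoc_of_le hc.1.le] at ht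
        have h1 : N₂ ≤ t := le_trans hyN₂ ht.1.le
        have h2 := hN₂ t h1
        rw [Real.dist_eq, sub_zero] at h2
        rw [Real.norm_eq_abs]
        exact le_of_lt h2
    have hcy : |c - y| ≤ 1 := by
      rw [abs_of_nonneg (by linarith [hc.1] : (0:ℝ) ≤ c - y)]
      linarith [hc.2]
    have hqc : |deriv q c| < ε/2 := by
      rw [hcq]
      have h1 := hN₁ y hyN₁
      have h2 := hN₁ (y+1) (by linarith)
      rw [Real.dist_eq, sub_zero] at h1 h2
      rw [show (y + 1 - y : ℝ) = 1 by ring, div_one]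
      calc |q (y+1) - q y| ≤ |q (y+1)| + |q y| := abs_sub _ _
        _ < ε/2 := by linarith
    rw [Real.dist_eq, sub_zero]
    have : deriv q y = deriv q c - ∫ t in y..c, deriv (deriv q) t := by
      rw [hftc]; ring
    rw [this]
    calc |deriv q c - ∫ t in y..c, deriv (deriv q) t|
        ≤ |deriv q c| + |∫ t in y..c, deriv (deriv q) t| := abs_sub _ _
      _ ≤ |deriv q c| + (ε/4) * |c - y| := by linarith
      _ < ε/2 + (ε/4) * 1 := by
          have h4 : (0:ℝ) < ε/4 := by linarith
          have := mul_le_mul_of_nonneg_left hcy h4.le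
          linarith
      _ < ε := by linarith
  -- the antiderivative g with g' = q²
  set g : ℝ → ℝ := fun y => y * (q y) ^ 2 + (q y) ^ 4 - (deriv q y) ^ 2 with hg
  have hgderiv : ∀ y : ℝ, HasDerivAt g ((q y) ^ 2) y := by
    intro y
    have hq : HasDerivAt q (deriv q y) y := (hq1 y).hasDerivAt
    have hq' : HasDerivAt (deriv q) (2 * (q y) ^ 3 + y * q y) y := by
      have := (hq2 y).hasDerivAt
      rwa [hPII y] at this
    have h1 : HasDerivAt (fun t => t * (q t) ^ 2)
        (1 * (q y) ^ 2 + y * (2 * q y ^ 1 * deriv q y)) y :=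
      (hasDerivAt_id y).mul (hq.pow 2)
    have h2 : HasDerivAt (fun t => (q t) ^ 4) (4 * q y ^ 3 * deriv q y) y := hq.pow 4
    have h3 : HasDerivAt (fun t => (deriv q t) ^ 2)
        (2 * deriv q y ^ 1 * (2 * (q y) ^ 3 + y * q y)) y := hq'.pow 2
    have := (h1.add h2).sub h3
    exact this.congr_deriv (by ring)
  have hglim : Tendsto g atTop (𝓝 0) := by
    have h1 : Tendsto (fun y => y * (q y) ^ 2) atTop (𝓝 0) := by
      have := hxq.mul hq0
      refine (by simpa using this : Tendsto (fun y => y * q y * q y) atTop (𝓝 0)).congr ?_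
      intro y; ring
    have h2 : Tendsto (fun y => (q y) ^ 4) atTop (𝓝 0) := by simpa using hq0.pow 4
    have h3 : Tendsto (fun y => (deriv q y) ^ 2) atTop (𝓝 0) := by simpa using hq'.pow 2
    have := (h1.add h2).sub h3
    simpa using this
  have hnonneg : ∀ t ∈ Set.Ioi x, (0:ℝ) ≤ (q t) ^ 2 := fun t _ => sq_nonneg _
  have hderivIci : ∀ t ∈ Set.Ici x, HasDerivAt g ((q t) ^ 2) t := fun t _ => hgderiv t
  have hint : IntegrableOn (fun s => (q s) ^ 2) (Set.Ioi x) :=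
    integrableOn_Ioi_deriv_of_nonneg' hderivIci hnonneg hglim
  have hval : ∫ s in Set.Ioi x, (q s) ^ 2 = 0 - g x :=
    integral_Ioi_of_hasDerivAt_of_nonneg' hderivIci hnonneg hglim
  constructor
  · rwa [integrableOn_Ici_iff_integrableOn_Ioi]
  · rw [MeasureTheory.integral_Ici_eq_integral_Ioi, hval]
    simp only [hg]
    ring
end

section
/- For every fixed integer L ≥ 1, t^{L²/2} · e^{−2tL} · D_L(t) tends to (2π)^{−L} · π^{L/2} · 2^{−L(L−1)/2} · Π_{q=0}^{L−1} q! as t → ∞. -/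
open MeasureTheory Filter Real

/-- The `n×n` Toeplitz determinant with symbol `e^{2t cos θ}`, written as an
`n`-fold integral. -/
noncomputable def toeplitzD (n : ℕ) (t : ℝ) : ℝ :=
  (1 / ((2 * Real.pi) ^ n * n.factorial)) *
    ∫ θ : Fin n → ℝ in Set.univ.pi fun _ => Set.Icc (-Real.pi) Real.pi,
      Real.exp (2 * t * ∑ j, Real.cos (θ j)) *
        ∏ k : Fin n, ∏ l ∈ Finset.Ioi k,
          ‖Complex.exp (θ k * Complex.I) - Complex.exp (θ l * Complex.I)‖ ^ 2

section HermiteMehta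
open Polynomial

noncomputable def gauss (x : ℝ) : ℝ := Real.exp (-(x ^ 2 / 2))

lemma integrable_pow_gauss (n : ℕ) : Integrable (fun x : ℝ => x ^ n * gauss x) := by
  have h := integrable_rpow_mul_exp_neg_mul_sq (b := (1:ℝ)/2) (by norm_num)
      (s := (n : ℝ)) (lt_of_lt_of_le neg_one_lt_zero (Nat.cast_nonneg n))
  refine h.congr (Eventually.of_forall fun x => ?_)
  simp only [Real.rpow_natCast]
  unfold gauss
  ring_nf

lemma integrable_aeval_gauss (P : ℤ[X]) : Integrable (fun x : ℝ => aeval x P * gauss x) := by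
  have : (fun x : ℝ => aeval x P * gauss x) =
      fun x : ℝ => ∑ k ∈ Finset.range (P.natDegree + 1), ((P.coeff k : ℝ) * (x ^ k * gauss x)) := by
    funext x
    have : aeval x P = ∑ k ∈ Finset.range (P.natDegree + 1), (P.coeff k : ℝ) * x ^ k := by
      rw [aeval_def, eval₂_eq_sum_range]
      simp
    rw [this, Finset.sum_mul]
    exact Finset.sum_congr rfl fun k _ => by ring
  rw [this]
  exact integrable_finset_sum _ fun k _ => ((integrable_pow_gauss k).const_mul _)

lemma hasDerivAt_gauss (x : ℝ) : HasDerivAt gauss (-x * gauss x) x := by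
  have h : HasDerivAt (fun x : ℝ => -(x ^ 2 / 2)) (-x) x := by
    have := ((hasDerivAt_pow 2 x).div_const 2).neg
    simp at this; exact this
  show HasDerivAt (fun x => Real.exp (-(x ^ 2 / 2))) (-x * Real.exp (-(x ^ 2 / 2))) x
  simpa [mul_comm] using (h.exp)

lemma hasDerivAt_hermite_gauss (n : ℕ) (x : ℝ) :
    HasDerivAt (fun y => aeval y (hermite n) * gauss y)
      (-(aeval x (hermite (n+1)) * gauss x)) x := by
  have h := (Polynomial.hasDerivAt_aeval (hermite n) x).mul (hasDerivAt_gauss x)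
  have e : aeval x (derivative (hermite n)) * gauss x + aeval x (hermite n) * (-x * gauss x)
      = -(aeval x (hermite (n+1)) * gauss x) := by
    rw [hermite_succ]
    simp only [map_sub, map_mul, aeval_X]
    ring
  rw [e] at h
  exact h

lemma ibp_step (P : ℤ[X]) (n : ℕ) :
    ∫ x : ℝ, aeval x P * (aeval x (hermite (n+1)) * gauss x)
      = ∫ x : ℝ, aeval x (derivative P) * (aeval x (hermite n) * gauss x) := by
  have key := integral_mul_deriv_eq_deriv_mul_of_integrable
    (u := fun x : ℝ => aeval x P)
    (v := fun x : ℝ => -(aeval x (hermite n) * gauss x))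
    (u' := fun x : ℝ => aeval x (derivative P))
    (v' := fun x : ℝ => aeval x (hermite (n+1)) * gauss x)
    (fun x _ => Polynomial.hasDerivAt_aeval P x)
    (fun x _ => by have h := (hasDerivAt_hermite_gauss n x).neg; simp at h ⊢; exact h)
    (by
      have := integrable_aeval_gauss (P * hermite (n+1))
      refine this.congr (Eventually.of_forall fun x => ?_)
      simp only [Pi.mul_apply, map_mul, Pi.neg_apply]
      ring)
    (by
      have := (integrable_aeval_gauss (derivative P * hermite n)).neg
      refine this.congr (Eventually.of_forall fun x => ?_)
      simp only [Pi.mul_apply, map_mul, Pi.neg_apply]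
      ring)
    (by
      have := (integrable_aeval_gauss (P * hermite n)).neg
      refine this.congr (Eventually.of_forall fun x => ?_)
      simp only [Pi.mul_apply, map_mul, Pi.neg_apply]
      ring)
  rw [key, ← integral_neg]
  congr 1; funext x; ring

lemma integral_aeval_hermite_gauss (n : ℕ) (P : ℤ[X]) :
    ∫ x : ℝ, aeval x P * (aeval x (hermite n) * gauss x)
      = ∫ x : ℝ, aeval x (derivative^[n] P) * gauss x := by
  induction n generalizing P with
  | zero => simp [hermite_zero]
  | succ n ih =>
    rw [ibp_step P n, ih (derivative P), Function.iterate_succ_apply]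

lemma integral_gauss : ∫ x : ℝ, gauss x = Real.sqrt (2 * Real.pi) := by
  have h := integral_gaussian (1/2)
  have : (fun x : ℝ => Real.exp (-(1/2) * x ^ 2)) = gauss := by
    funext x; unfold gauss; ring_nf
  rw [this] at h
  rw [h, show Real.pi / (1/2) = 2 * Real.pi by ring]

lemma iterate_derivative_hermite_self (n : ℕ) :
    derivative^[n] (hermite n) = C (n.factorial : ℤ) := by
  have hdeg : (derivative^[n] (hermite n)).natDegree ≤ 0 := by
    have := Polynomial.natDegree_iterate_derivative (hermite n) n
    simpa [natDegree_hermite] using this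
  have := Polynomial.eq_C_of_natDegree_le_zero hdeg
  rw [this, coeff_iterate_derivative]
  simp [coeff_hermite_self, Nat.descFactorial_self]

lemma hermite_orthogonality (m n : ℕ) :
    ∫ x : ℝ, aeval x (hermite m) * (aeval x (hermite n) * gauss x)
      = if m = n then (n.factorial : ℝ) * Real.sqrt (2 * Real.pi) else 0 := by
  -- wlog m ≤ n
  wlog hmn : m ≤ n generalizing m n
  · push_neg at hmn
    have h := this n m hmn.le
    have e1 : (if n = m then (m.factorial : ℝ) * Real.sqrt (2 * Real.pi) else 0)
        = (if m = n then (n.factorial : ℝ) * Real.sqrt (2 * Real.pi) else 0) := by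
      rcases eq_or_ne m n with rfl | hne
      · simp
      · simp [hne, hne.symm]
    rw [e1] at h
    rw [← h]
    congr 1; funext x; ring
  rw [integral_aeval_hermite_gauss n (hermite m)]
  rcases eq_or_lt_of_le hmn with rfl | hlt
  · rw [iterate_derivative_hermite_self]
    simp only [map_natCast, if_pos rfl]
    rw [MeasureTheory.integral_const_mul, integral_gauss]
    norm_num
  · rw [Polynomial.iterate_derivative_eq_zero (by simpa [natDegree_hermite] using hlt)]
    simp [hlt.ne]

lemma vandermonde_hermite (n : ℕ) (x : Fin n → ℝ) :
    ∏ k : Fin n, ∏ l ∈ Finset.Ioi k, (x l - x k)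
      = (Matrix.of fun i j : Fin n => aeval (x i) (hermite (j : ℕ))).det := by
  have hdeg : ∀ j : Fin n, ((hermite (j:ℕ)).map (Int.castRingHom ℝ)).natDegree = (j:ℕ) := by
    intro j
    have hinj : Function.Injective ⇑(Int.castRingHom ℝ) := by
      simpa using Int.cast_injective (α := ℝ)
    rw [Polynomial.natDegree_map_eq_of_injective hinj]
    exact natDegree_hermite
  have hmon : ∀ j : Fin n, ((hermite (j:ℕ)).map (Int.castRingHom ℝ)).Monic :=
    fun j => (hermite_monic _).map _
  have h := Matrix.det_eval_matrixOfPolynomials_eq_det_vandermonde x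
    (fun j => (hermite (j:ℕ)).map (Int.castRingHom ℝ)) hdeg hmon
  rw [Matrix.det_vandermonde] at h
  rw [h]
  congr 1
  ext i j
  simp [Polynomial.eval_map, aeval_def]

lemma mehta (n : ℕ) :
    ∫ x : Fin n → ℝ, (∏ k : Fin n, ∏ l ∈ Finset.Ioi k, (x l - x k) ^ 2) * ∏ i, gauss (x i)
      = (n.factorial : ℝ) * ∏ i : Fin n, ((i : ℕ).factorial * Real.sqrt (2 * Real.pi)) := by
  classical
  -- step 1: rewrite integrand as double sum over permutations
  have step1 : ∀ x : Fin n → ℝ,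
      (∏ k : Fin n, ∏ l ∈ Finset.Ioi k, (x l - x k) ^ 2) * ∏ i, gauss (x i)
        = ∑ σ : Equiv.Perm (Fin n), ∑ τ : Equiv.Perm (Fin n),
            (((Equiv.Perm.sign σ : ℤ) : ℝ) * ((Equiv.Perm.sign τ : ℤ) : ℝ)) *
              ∏ i : Fin n, (aeval (x i) (hermite ((σ i : Fin n) : ℕ))
                * aeval (x i) (hermite ((τ i : Fin n) : ℕ)) * gauss (x i)) := by
    intro x
    have hsq : (∏ k : Fin n, ∏ l ∈ Finset.Ioi k, (x l - x k) ^ 2)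
        = (∏ k : Fin n, ∏ l ∈ Finset.Ioi k, (x l - x k)) ^ 2 := by
      rw [← Finset.prod_pow]
      exact Finset.prod_congr rfl fun k _ => by rw [Finset.prod_pow]
    rw [hsq, vandermonde_hermite]
    set M := Matrix.of fun i j : Fin n => aeval (x i) (hermite (j : ℕ)) with hM
    have hdet : M.det = ∑ σ : Equiv.Perm (Fin n),
        ((Equiv.Perm.sign σ : ℤ) : ℝ) * ∏ i : Fin n, aeval (x i) (hermite ((σ i : Fin n) : ℕ)) := by
      rw [← Matrix.det_transpose, Matrix.det_apply]
      refine Finset.sum_congr rfl fun σ _ => ?_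
      rw [Units.smul_def, zsmul_eq_mul]
      push_cast
      rfl
    rw [hdet, sq, Finset.sum_mul_sum, Finset.sum_mul]
    refine Finset.sum_congr rfl fun σ _ => ?_
    rw [Finset.sum_mul]
    refine Finset.sum_congr rfl fun τ _ => ?_
    have hp : ∏ i : Fin n, (aeval (x i) (hermite ((σ i : Fin n) : ℕ))
        * aeval (x i) (hermite ((τ i : Fin n) : ℕ)) * gauss (x i))
        = (∏ i : Fin n, aeval (x i) (hermite ((σ i : Fin n) : ℕ)))
          * ((∏ i : Fin n, aeval (x i) (hermite ((τ i : Fin n) : ℕ)))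
            * ∏ i : Fin n, gauss (x i)) := by
      rw [← Finset.prod_mul_distrib, ← Finset.prod_mul_distrib]
      exact Finset.prod_congr rfl fun i _ => by ring
    rw [hp]
    ring
  -- step 2: integrate term by term
  have hint : ∀ σ τ : Equiv.Perm (Fin n),
      Integrable (fun x : Fin n → ℝ =>
        ∏ i : Fin n, (aeval (x i) (hermite ((σ i : Fin n) : ℕ))
          * aeval (x i) (hermite ((τ i : Fin n) : ℕ)) * gauss (x i))) := by
    intro σ τ
    refine Integrable.fintype_prod (f := fun i (y : ℝ) =>
      aeval y (hermite ((σ i : Fin n) : ℕ)) * aeval y (hermite ((τ i : Fin n) : ℕ)) * gauss y)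
      (fun i => ?_)
    have := integrable_aeval_gauss (hermite ((σ i : Fin n) : ℕ) * hermite ((τ i : Fin n) : ℕ))
    refine this.congr (Eventually.of_forall fun y => ?_)
    simp only [map_mul]
  calc ∫ x : Fin n → ℝ, (∏ k : Fin n, ∏ l ∈ Finset.Ioi k, (x l - x k) ^ 2) * ∏ i, gauss (x i)
      = ∑ σ : Equiv.Perm (Fin n), ∑ τ : Equiv.Perm (Fin n),
          (((Equiv.Perm.sign σ : ℤ) : ℝ) * ((Equiv.Perm.sign τ : ℤ) : ℝ)) *
            ∫ x : Fin n → ℝ, ∏ i : Fin n, (aeval (x i) (hermite ((σ i : Fin n) : ℕ))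
              * aeval (x i) (hermite ((τ i : Fin n) : ℕ)) * gauss (x i)) := by
        rw [show (fun x : Fin n → ℝ =>
            (∏ k : Fin n, ∏ l ∈ Finset.Ioi k, (x l - x k) ^ 2) * ∏ i, gauss (x i)) = fun x =>
            ∑ σ : Equiv.Perm (Fin n), ∑ τ : Equiv.Perm (Fin n),
            (((Equiv.Perm.sign σ : ℤ) : ℝ) * ((Equiv.Perm.sign τ : ℤ) : ℝ)) *
              ∏ i : Fin n, (aeval (x i) (hermite ((σ i : Fin n) : ℕ))
                * aeval (x i) (hermite ((τ i : Fin n) : ℕ)) * gauss (x i)) from funext step1]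
        rw [integral_finset_sum _ (fun σ _ => integrable_finset_sum _
          (fun τ _ => ((hint σ τ).const_mul _)))]
        refine Finset.sum_congr rfl fun σ _ => ?_
        rw [integral_finset_sum _ (fun τ _ => ((hint σ τ).const_mul _))]
        exact Finset.sum_congr rfl fun τ _ => MeasureTheory.integral_const_mul _ _
    _ = ∑ σ : Equiv.Perm (Fin n), ∑ τ : Equiv.Perm (Fin n),
          (((Equiv.Perm.sign σ : ℤ) : ℝ) * ((Equiv.Perm.sign τ : ℤ) : ℝ)) *
            ∏ i : Fin n, (if ((σ i : Fin n) : ℕ) = ((τ i : Fin n) : ℕ)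
              then (((τ i : Fin n) : ℕ).factorial : ℝ) * Real.sqrt (2 * Real.pi) else 0) := by
        refine Finset.sum_congr rfl fun σ _ => Finset.sum_congr rfl fun τ _ => ?_
        congr 1
        rw [MeasureTheory.integral_fintype_prod_volume_eq_prod (f := fun i (y : ℝ) =>
          aeval y (hermite ((σ i : Fin n) : ℕ)) * aeval y (hermite ((τ i : Fin n) : ℕ)) * gauss y)]
        refine Finset.prod_congr rfl fun i _ => ?_
        rw [← hermite_orthogonality]
        congr 1; funext y; ring
    _ = ∑ σ : Equiv.Perm (Fin n),
          ∏ i : Fin n, ((((σ i : Fin n) : ℕ).factorial : ℝ) * Real.sqrt (2 * Real.pi)) := by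
        refine Finset.sum_congr rfl fun σ _ => ?_
        rw [Finset.sum_eq_single σ]
        · have hsgn : (((Equiv.Perm.sign σ : ℤ) : ℝ) * ((Equiv.Perm.sign σ : ℤ) : ℝ)) = 1 := by
            have : ((Equiv.Perm.sign σ : ℤ)) * ((Equiv.Perm.sign σ : ℤ)) = 1 := by
              rcases Int.units_eq_one_or (Equiv.Perm.sign σ) with h | h <;> rw [h] <;> rfl
            exact_mod_cast congrArg (fun z : ℤ => (z : ℝ)) this
          rw [hsgn, one_mul]
          exact Finset.prod_congr rfl fun i _ => by rw [if_pos rfl]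
        · intro τ _ hτ
          have : ∃ i : Fin n, σ i ≠ τ i := by
            by_contra h
            push_neg at h
            exact hτ.symm (Equiv.ext h)
          obtain ⟨i, hi⟩ := this
          rw [Finset.prod_eq_zero (Finset.mem_univ i), mul_zero]
          rw [if_neg (fun h => hi (Fin.ext h))]
        · intro h
          exact absurd (Finset.mem_univ σ) h
    _ = (n.factorial : ℝ) * ∏ i : Fin n, ((i : ℕ).factorial * Real.sqrt (2 * Real.pi)) := by
        have : ∀ σ : Equiv.Perm (Fin n),
            ∏ i : Fin n, ((((σ i : Fin n) : ℕ).factorial : ℝ) * Real.sqrt (2 * Real.pi))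
              = ∏ i : Fin n, ((i : ℕ).factorial * Real.sqrt (2 * Real.pi)) := fun σ =>
          Equiv.prod_comp σ (fun i => (((i : Fin n) : ℕ).factorial : ℝ) * Real.sqrt (2 * Real.pi))
        rw [Finset.sum_congr rfl fun σ _ => this σ, Finset.sum_const, Finset.card_univ,
          Fintype.card_perm, Fintype.card_fin, nsmul_eq_mul]

end HermiteMehta

lemma two_sub_two_cos (u : ℝ) : 2 - 2 * Real.cos u = 4 * Real.sin (u / 2) ^ 2 := by
  have h : u = 2 * (u / 2) := by ring
  nth_rewrite 1 [h]
  rw [Real.cos_two_mul, Real.cos_sq']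
  ring

lemma abs_exp_sub_exp_sq (a b : ℝ) :
    ‖Complex.exp (a * Complex.I) - Complex.exp (b * Complex.I)‖ ^ 2
      = 2 - 2 * Real.cos (a - b) := by
  rw [Complex.sq_norm, Complex.normSq_apply, Complex.sub_re, Complex.sub_im,
    Complex.exp_ofReal_mul_I_re, Complex.exp_ofReal_mul_I_im,
    Complex.exp_ofReal_mul_I_re, Complex.exp_ofReal_mul_I_im, Real.cos_sub]
  nlinarith [Real.sin_sq_add_cos_sq a, Real.sin_sq_add_cos_sq b]

lemma jordan_bound {u : ℝ} (hu : |u| ≤ Real.pi) :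
    2 * u ^ 2 / Real.pi ^ 2 ≤ 1 - Real.cos u := by
  have h1 : 1 - Real.cos u = 2 * Real.sin (u / 2) ^ 2 := by
    have := two_sub_two_cos u; linarith
  have h2 : |u / 2| ≤ Real.pi / 2 := by
    rw [abs_div, abs_of_nonneg (by norm_num : (0:ℝ) ≤ 2)]
    linarith
  have h3 := Real.mul_abs_le_abs_sin h2
  have h4 : (2 / Real.pi * |u / 2|) ^ 2 ≤ Real.sin (u / 2) ^ 2 := by
    rw [← sq_abs (Real.sin (u / 2))]
    exact pow_le_pow_left₀ (by positivity) h3 2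
  have hπ := Real.pi_pos
  have h5 : (2 / Real.pi * |u / 2|) ^ 2 = u ^ 2 / Real.pi ^ 2 := by
    rw [mul_pow, div_pow, sq_abs, div_pow]
    field_simp
  rw [h1]
  rw [h5] at h4
  have he : 2 * u ^ 2 / Real.pi ^ 2 = 2 * (u ^ 2 / Real.pi ^ 2) := by ring
  rw [he]
  linarith

lemma sin_div_self_tendsto :
    Tendsto (fun w : ℝ => Real.sin w / w) (nhdsWithin 0 {0}ᶜ) (nhds 1) := by
  have h := Real.hasDerivAt_sin 0
  rw [hasDerivAt_iff_tendsto_slope, Real.cos_zero] at h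
  refine h.congr fun w => ?_
  rw [slope_def_field, Real.sin_zero, sub_zero, sub_zero]

lemma sqrt_tendsto_atTop : Tendsto Real.sqrt atTop atTop := by
  have h : Tendsto (fun t : ℝ => t ^ ((1:ℝ)/2)) atTop atTop :=
    tendsto_rpow_atTop (by norm_num)
  refine h.congr' ?_
  filter_upwards [eventually_ge_atTop (0:ℝ)] with t ht
  rw [Real.sqrt_eq_rpow]

lemma key_tendsto (a : ℝ) :
    Tendsto (fun t : ℝ => 4 * t * Real.sin (a / (2 * Real.sqrt t)) ^ 2) atTop (nhds (a ^ 2)) := by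
  rcases eq_or_ne a 0 with rfl | ha
  · have : (fun t : ℝ => 4 * t * Real.sin (0 / (2 * Real.sqrt t)) ^ 2) = fun _ => (0:ℝ) := by
      funext t; simp
    rw [this, show ((0:ℝ)^2) = 0 by norm_num]
    exact tendsto_const_nhds
  · have hw : Tendsto (fun t : ℝ => a / (2 * Real.sqrt t)) atTop (nhdsWithin 0 {0}ᶜ) := by
      rw [tendsto_nhdsWithin_iff]
      constructor
      · exact Tendsto.div_atTop tendsto_const_nhds
          (sqrt_tendsto_atTop.const_mul_atTop (by norm_num : (0:ℝ) < 2))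
      · filter_upwards [eventually_gt_atTop (0:ℝ)] with t ht
        have hst : 0 < Real.sqrt t := Real.sqrt_pos.2 ht
        simp only [Set.mem_compl_iff, Set.mem_singleton_iff]
        intro hcon
        rcases div_eq_zero_iff.1 hcon with h | h
        · exact ha h
        · nlinarith
    have hcomp : Tendsto
        (fun t : ℝ => Real.sin (a / (2 * Real.sqrt t)) / (a / (2 * Real.sqrt t)))
        atTop (nhds 1) := sin_div_self_tendsto.comp hw
    have hmain := (tendsto_const_nhds (x := a ^ 2) (f := atTop)).mul (hcomp.pow 2)
    rw [one_pow, mul_one] at hmain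
    refine hmain.congr' ?_
    filter_upwards [eventually_gt_atTop (0:ℝ)] with t ht
    have hst : 0 < Real.sqrt t := Real.sqrt_pos.2 ht
    have hsq : Real.sqrt t ^ 2 = t := Real.sq_sqrt ht.le
    have hw2 : (a / (2 * Real.sqrt t)) ^ 2 = a ^ 2 / (4 * t) := by
      rw [div_pow]
      congr 1
      nlinarith
    have hwne : a / (2 * Real.sqrt t) ≠ 0 := by
      intro hcon
      rcases div_eq_zero_iff.1 hcon with h | h
      · exact ha h
      · nlinarith
    rw [div_pow]
    rw [hw2]
    field_simp

lemma exp_term_tendsto (a : ℝ) :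
    Tendsto (fun t : ℝ => 2 * t * (Real.cos (a / Real.sqrt t) - 1)) atTop (nhds (-a ^ 2)) := by
  have h := (key_tendsto a).neg
  refine h.congr' ?_
  filter_upwards [eventually_gt_atTop (0:ℝ)] with t ht
  have h2 := two_sub_two_cos (a / Real.sqrt t)
  rw [show a / Real.sqrt t / 2 = a / (2 * Real.sqrt t) by rw [div_div, mul_comm]] at h2
  linear_combination t * h2

lemma pair_term_tendsto (a : ℝ) :
    Tendsto (fun t : ℝ => t * (2 - 2 * Real.cos (a / Real.sqrt t))) atTop (nhds (a ^ 2)) := by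
  have h := key_tendsto a
  refine h.congr' ?_
  filter_upwards [eventually_gt_atTop (0:ℝ)] with t ht
  have h2 := two_sub_two_cos (a / Real.sqrt t)
  rw [show a / Real.sqrt t / 2 = a / (2 * Real.sqrt t) by rw [div_div, mul_comm]] at h2
  linear_combination (-t) * h2

def NN (n : ℕ) : ℕ := ∑ k : Fin n, (Finset.Ioi k).card

lemma two_NN (n : ℕ) : 2 * NN n = n * (n - 1) := by
  have h1 : NN n = ∑ i ∈ Finset.range n, (n - 1 - i) := by
    rw [NN, ← Fin.sum_univ_eq_sum_range (fun i => n - 1 - i) n]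
    exact Finset.sum_congr rfl fun k _ => Fin.card_Ioi k
  have h2 : ∑ i ∈ Finset.range n, (n - 1 - i) = ∑ i ∈ Finset.range n, i :=
    Finset.sum_range_reflect id n
  have h3 : (∑ i ∈ Finset.range n, i) + (∑ i ∈ Finset.range n, (n - 1 - i))
      = ∑ i ∈ Finset.range n, (n - 1) := by
    rw [← Finset.sum_add_distrib]
    refine Finset.sum_congr rfl fun i hi => ?_
    have : i ≤ n - 1 := Nat.le_sub_one_of_lt (Finset.mem_range.1 hi)
    omega
  rw [Finset.sum_const, Finset.card_range, smul_eq_mul] at h3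
  omega

noncomputable def innerFun (n : ℕ) (t : ℝ) (x : Fin n → ℝ) : ℝ :=
  Real.exp (∑ j, 2 * t * (Real.cos (x j / Real.sqrt t) - 1)) *
    ∏ k : Fin n, ∏ l ∈ Finset.Ioi k,
      (t * (2 - 2 * Real.cos ((x k - x l) / Real.sqrt t)))

noncomputable def bigBox (n : ℕ) (t : ℝ) : Set (Fin n → ℝ) :=
  Set.univ.pi fun _ => Set.Icc (-(Real.pi * Real.sqrt t)) (Real.pi * Real.sqrt t)

lemma measurableSet_bigBox (n : ℕ) (t : ℝ) : MeasurableSet (bigBox n t) :=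
  MeasurableSet.univ_pi fun _ => measurableSet_Icc

noncomputable def Phi (n : ℕ) (t : ℝ) : (Fin n → ℝ) → ℝ :=
  (bigBox n t).indicator (innerFun n t)

noncomputable def limFun (n : ℕ) (x : Fin n → ℝ) : ℝ :=
  Real.exp (-∑ j, x j ^ 2) * ∏ k : Fin n, ∏ l ∈ Finset.Ioi k, (x k - x l) ^ 2

lemma main_eq (n : ℕ) {t : ℝ} (ht : 0 < t) :
    t ^ ((n : ℝ) ^ 2 / 2) * Real.exp (-2 * t * n) * toeplitzD n t
      = (1 / ((2 * Real.pi) ^ n * n.factorial)) * ∫ x : Fin n → ℝ, Phi n t x := by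
  have hs : 0 < Real.sqrt t := Real.sqrt_pos.2 ht
  have hsq : Real.sqrt t ^ 2 = t := Real.sq_sqrt ht.le
  set s := Real.sqrt t with hsdef
  -- Step 1: rewrite the Toeplitz integrand with cosines
  set F : (Fin n → ℝ) → ℝ := fun θ =>
    Real.exp (2 * t * ∑ j, Real.cos (θ j)) *
      ∏ k : Fin n, ∏ l ∈ Finset.Ioi k, (2 - 2 * Real.cos (θ k - θ l)) with hF
  have habs : toeplitzD n t
      = (1 / ((2 * Real.pi) ^ n * n.factorial)) *
        ∫ θ : Fin n → ℝ in Set.univ.pi fun _ => Set.Icc (-Real.pi) Real.pi, F θ := by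
    rw [toeplitzD]
    congr 1
    refine integral_congr_ae (Eventually.of_forall fun θ => ?_)
    rw [hF]
    dsimp only
    congr 1
    exact Finset.prod_congr rfl fun k _ => Finset.prod_congr rfl fun l _ =>
      abs_exp_sub_exp_sq (θ k) (θ l)
  -- Step 2: change of variables
  have hbox : MeasurableSet (Set.univ.pi fun _ : Fin n => Set.Icc (-Real.pi) Real.pi) :=
    MeasurableSet.univ_pi fun _ => measurableSet_Icc
  have hrank : Module.finrank ℝ (Fin n → ℝ) = n := by
    rw [Module.finrank_fintype_fun_eq_card, Fintype.card_fin]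
  have hcv := Measure.integral_comp_inv_smul_of_nonneg (volume : Measure (Fin n → ℝ))
    (fun θ => Set.indicator (Set.univ.pi fun _ : Fin n => Set.Icc (-Real.pi) Real.pi) F θ)
    (R := s) hs.le
  rw [hrank] at hcv
  have hint : ∫ θ : Fin n → ℝ in Set.univ.pi fun _ => Set.Icc (-Real.pi) Real.pi, F θ
      = (s ^ n)⁻¹ * ∫ x : Fin n → ℝ,
          Set.indicator (Set.univ.pi fun _ : Fin n => Set.Icc (-Real.pi) Real.pi) F (s⁻¹ • x) := by
    rw [← integral_indicator hbox]
    rw [hcv, smul_eq_mul, ← mul_assoc, inv_mul_cancel₀ (by positivity), one_mul]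
  -- Step 3: assemble
  rw [habs, hint]
  rw [show t ^ ((n : ℝ) ^ 2 / 2) * Real.exp (-2 * t * n) *
      ((1 / ((2 * Real.pi) ^ n * n.factorial)) * ((s ^ n)⁻¹ * ∫ x : Fin n → ℝ,
        Set.indicator (Set.univ.pi fun _ : Fin n => Set.Icc (-Real.pi) Real.pi) F (s⁻¹ • x)))
      = (1 / ((2 * Real.pi) ^ n * n.factorial)) *
        ((t ^ ((n : ℝ) ^ 2 / 2) * Real.exp (-2 * t * n) * (s ^ n)⁻¹) * ∫ x : Fin n → ℝ,
          Set.indicator (Set.univ.pi fun _ : Fin n => Set.Icc (-Real.pi) Real.pi) F (s⁻¹ • x))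
      from by ring]
  congr 1
  rw [← MeasureTheory.integral_const_mul]
  congr 1
  funext x
  -- pointwise identity
  by_cases hx : x ∈ bigBox n t
  · have hmem : s⁻¹ • x ∈ Set.univ.pi fun _ : Fin n => Set.Icc (-Real.pi) Real.pi := by
      intro j _
      have hj := hx j (Set.mem_univ j)
      simp only [Set.mem_Icc] at hj ⊢
      constructor
      · rw [Pi.smul_apply, smul_eq_mul, inv_mul_eq_div, le_div_iff₀ hs]
        calc -Real.pi * s = -(Real.pi * s) := by ring
          _ ≤ x j := hj.1
      · rw [Pi.smul_apply, smul_eq_mul, inv_mul_eq_div, div_le_iff₀ hs]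
        exact hj.2
    rw [Set.indicator_of_mem hmem, Phi, Set.indicator_of_mem hx]
    -- now the algebraic identity
    rw [hF, innerFun]
    dsimp only
    have harg : ∀ j, (s⁻¹ • x) j = x j / s := by
      intro j; rw [Pi.smul_apply, smul_eq_mul, inv_mul_eq_div]
    -- exp part
    have hexp : Real.exp (-2 * t * n) * Real.exp (2 * t * ∑ j, Real.cos ((s⁻¹ • x) j))
        = Real.exp (∑ j, 2 * t * (Real.cos (x j / s) - 1)) := by
      rw [← Real.exp_add]
      congr 1
      have : ∑ j : Fin n, 2 * t * (Real.cos (x j / s) - 1)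
          = 2 * t * (∑ j : Fin n, Real.cos (x j / s)) - 2 * t * n := by
        rw [Finset.mul_sum]
        rw [show (fun j : Fin n => 2 * t * (Real.cos (x j / s) - 1))
            = fun j : Fin n => 2 * t * Real.cos (x j / s) - 2 * t from
          funext fun j => by ring]
        rw [Finset.sum_sub_distrib, Finset.sum_const, Finset.card_univ, Fintype.card_fin,
          nsmul_eq_mul]
        ring
      rw [this]
      have : ∑ j : Fin n, Real.cos ((s⁻¹ • x) j) = ∑ j : Fin n, Real.cos (x j / s) :=
        Finset.sum_congr rfl fun j _ => by rw [harg j]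
      rw [this]
      ring
    -- power part
    have hcast : ((NN n : ℕ) : ℝ) = ((n : ℝ) ^ 2 - n) / 2 := by
      have h2 := two_NN n
      rcases Nat.eq_zero_or_pos n with rfl | hn
      · simp [NN]
      · have h1 : (1 : ℕ) ≤ n := hn
        have hc := congrArg (fun m : ℕ => (m : ℝ)) h2
        push_cast [Nat.cast_sub h1] at hc
        nlinarith [hc]
    have hpow : t ^ ((n : ℝ) ^ 2 / 2) * (s ^ n)⁻¹ = t ^ NN n := by
      have hsn : (s : ℝ) ^ n = t ^ ((n : ℝ) / 2) := by
        rw [hsdef, Real.sqrt_eq_rpow, ← Real.rpow_natCast (t ^ ((1:ℝ)/2)) n,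
          ← Real.rpow_mul ht.le]
        congr 1
        ring
      rw [hsn, ← Real.rpow_neg ht.le, ← Real.rpow_add ht, ← Real.rpow_natCast t (NN n),
        hcast]
      ring_nf
    have hTprod : (t : ℝ) ^ NN n = ∏ k : Fin n, ∏ l ∈ Finset.Ioi k, t := by
      rw [NN, ← Finset.prod_pow_eq_pow_sum]
      exact Finset.prod_congr rfl fun k _ => (Finset.prod_const t).symm
    have hargsub : ∀ k l : Fin n, (s⁻¹ • x) k - (s⁻¹ • x) l = (x k - x l) / s := by
      intro k l; rw [harg k, harg l, div_sub_div_same]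
    have hprodeq : ∏ k : Fin n, ∏ l ∈ Finset.Ioi k,
        (2 - 2 * Real.cos ((s⁻¹ • x) k - (s⁻¹ • x) l))
        = ∏ k : Fin n, ∏ l ∈ Finset.Ioi k, (2 - 2 * Real.cos ((x k - x l) / s)) :=
      Finset.prod_congr rfl fun k _ => Finset.prod_congr rfl fun l _ => by rw [hargsub k l]
    have hfinal : ∏ k : Fin n, ∏ l ∈ Finset.Ioi k, (t * (2 - 2 * Real.cos ((x k - x l) / s)))
        = (t ^ NN n) * ∏ k : Fin n, ∏ l ∈ Finset.Ioi k, (2 - 2 * Real.cos ((x k - x l) / s)) := by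
      rw [hTprod, ← Finset.prod_mul_distrib]
      exact Finset.prod_congr rfl fun k _ => by rw [← Finset.prod_mul_distrib]
    rw [hprodeq, hfinal]
    calc t ^ ((n : ℝ) ^ 2 / 2) * Real.exp (-2 * t * n) * (s ^ n)⁻¹ *
          (Real.exp (2 * t * ∑ j, Real.cos ((s⁻¹ • x) j)) *
            ∏ k : Fin n, ∏ l ∈ Finset.Ioi k, (2 - 2 * Real.cos ((x k - x l) / s)))
        = (t ^ ((n : ℝ) ^ 2 / 2) * (s ^ n)⁻¹) *
          ((Real.exp (-2 * t * n) * Real.exp (2 * t * ∑ j, Real.cos ((s⁻¹ • x) j))) *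
            ∏ k : Fin n, ∏ l ∈ Finset.Ioi k, (2 - 2 * Real.cos ((x k - x l) / s))) := by
          ring
      _ = (t ^ NN n) * (Real.exp (∑ j, 2 * t * (Real.cos (x j / s) - 1)) *
            ∏ k : Fin n, ∏ l ∈ Finset.Ioi k, (2 - 2 * Real.cos ((x k - x l) / s))) := by
          rw [hpow, hexp]
      _ = Real.exp (∑ j, 2 * t * (Real.cos (x j / s) - 1)) *
          ((t ^ NN n) * ∏ k : Fin n, ∏ l ∈ Finset.Ioi k, (2 - 2 * Real.cos ((x k - x l) / s))) := by
          ring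
  · have hnmem : s⁻¹ • x ∉ Set.univ.pi fun _ : Fin n => Set.Icc (-Real.pi) Real.pi := by
      intro hcon
      apply hx
      intro j _
      have hj := hcon j (Set.mem_univ j)
      simp only [Set.mem_Icc] at hj ⊢
      rw [Pi.smul_apply, smul_eq_mul, inv_mul_eq_div, le_div_iff₀ hs, div_le_iff₀ hs] at hj
      constructor
      · calc -(Real.pi * s) = -Real.pi * s := by ring
          _ ≤ x j := hj.1
      · exact hj.2
    rw [Set.indicator_of_notMem hnmem, Phi, Set.indicator_of_notMem hx, mul_zero]

noncomputable def boundFun (n : ℕ) (x : Fin n → ℝ) : ℝ :=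
  ((2 * Real.pi ^ 2) ^ NN n * (NN n).factorial) *
    ∏ j, Real.exp (-(2 / Real.pi ^ 2) * x j ^ 2)

lemma measurable_innerFun (n : ℕ) (t : ℝ) : Measurable (innerFun n t) := by
  apply Measurable.mul
  · apply Real.measurable_exp.comp
    apply Finset.measurable_sum
    intro j _
    exact (((measurable_pi_apply j).div_const _).cos.sub measurable_const).const_mul _
  · apply Finset.measurable_prod
    intro k _
    apply Finset.measurable_prod
    intro l _
    exact measurable_const.mul (measurable_const.sub
      ((((measurable_pi_apply k).sub (measurable_pi_apply l)).div_const _).cos.const_mul 2))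

lemma phi_nonneg (n : ℕ) {t : ℝ} (ht : 0 ≤ t) (x : Fin n → ℝ) : 0 ≤ Phi n t x := by
  apply Set.indicator_nonneg
  intro y _
  apply mul_nonneg (Real.exp_pos _).le
  apply Finset.prod_nonneg
  intro k _
  apply Finset.prod_nonneg
  intro l _
  apply mul_nonneg ht
  nlinarith [Real.cos_le_one ((y k - y l) / Real.sqrt t)]

lemma boundFun_nonneg (n : ℕ) (x : Fin n → ℝ) : 0 ≤ boundFun n x := by
  apply mul_nonneg (by positivity)
  exact Finset.prod_nonneg fun j _ => (Real.exp_pos _).le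

lemma phi_le_bound (n : ℕ) {t : ℝ} (ht : 1 ≤ t) (x : Fin n → ℝ) :
    ‖Phi n t x‖ ≤ boundFun n x := by
  have ht0 : (0:ℝ) < t := lt_of_lt_of_le one_pos ht
  have hs : 0 < Real.sqrt t := Real.sqrt_pos.2 ht0
  have hsq : Real.sqrt t ^ 2 = t := Real.sq_sqrt ht0.le
  rw [Real.norm_eq_abs, abs_of_nonneg (phi_nonneg n ht0.le x)]
  by_cases hx : x ∈ bigBox n t
  swap
  · rw [Phi, Set.indicator_of_notMem hx]
    exact boundFun_nonneg n x
  rw [Phi, Set.indicator_of_mem hx, innerFun]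
  set S : ℝ := ∑ j, x j ^ 2 with hS
  have hS0 : 0 ≤ S := Finset.sum_nonneg fun j _ => sq_nonneg _
  have hπ := Real.pi_pos
  -- bound on the exponential factor
  have hexp : Real.exp (∑ j, 2 * t * (Real.cos (x j / Real.sqrt t) - 1))
      ≤ Real.exp (-(4 / Real.pi ^ 2) * S) := by
    rw [Real.exp_le_exp, hS, Finset.mul_sum]
    apply Finset.sum_le_sum
    intro j _
    have hmem := hx j (Set.mem_univ j)
    rw [Set.mem_Icc] at hmem
    have habs : |x j / Real.sqrt t| ≤ Real.pi := by
      rw [abs_div, abs_of_nonneg hs.le, div_le_iff₀ hs]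
      rw [abs_le]
      exact hmem
    have hj := jordan_bound habs
    have hu2 : t * (x j / Real.sqrt t) ^ 2 = x j ^ 2 := by
      rw [div_pow, hsq]
      field_simp
    have h1 : 2 * t * (Real.cos (x j / Real.sqrt t) - 1)
        ≤ 2 * t * (-(2 * (x j / Real.sqrt t) ^ 2 / Real.pi ^ 2)) := by
      apply mul_le_mul_of_nonneg_left _ (by positivity)
      linarith
    calc 2 * t * (Real.cos (x j / Real.sqrt t) - 1)
        ≤ 2 * t * (-(2 * (x j / Real.sqrt t) ^ 2 / Real.pi ^ 2)) := h1
      _ = -(4 / Real.pi ^ 2) * (t * (x j / Real.sqrt t) ^ 2) := by ring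
      _ = -(4 / Real.pi ^ 2) * x j ^ 2 := by rw [hu2]
  -- bound on each pair factor
  have hpair : ∏ k : Fin n, ∏ l ∈ Finset.Ioi k,
      (t * (2 - 2 * Real.cos ((x k - x l) / Real.sqrt t)))
      ≤ ∏ k : Fin n, ∏ l ∈ Finset.Ioi k, (x k - x l) ^ 2 := by
    apply Finset.prod_le_prod
    · intro k _
      apply Finset.prod_nonneg
      intro l _
      apply mul_nonneg ht0.le
      nlinarith [Real.cos_le_one ((x k - x l) / Real.sqrt t)]
    intro k _
    apply Finset.prod_le_prod
    · intro l _
      apply mul_nonneg ht0.le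
      nlinarith [Real.cos_le_one ((x k - x l) / Real.sqrt t)]
    intro l _
    set d : ℝ := x k - x l with hd
    have h2 := two_sub_two_cos (d / Real.sqrt t)
    have hrw : d / Real.sqrt t / 2 = d / (2 * Real.sqrt t) := by
      rw [div_div, mul_comm]
    rw [hrw] at h2
    have hsin := Real.sin_sq_le_sq (x := d / (2 * Real.sqrt t))
    have hdd : (d / (2 * Real.sqrt t)) ^ 2 = d ^ 2 / (4 * t) := by
      rw [div_pow]
      congr 1
      nlinarith
    calc t * (2 - 2 * Real.cos (d / Real.sqrt t))
        = 4 * t * Real.sin (d / (2 * Real.sqrt t)) ^ 2 := by linear_combination t * h2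
      _ ≤ 4 * t * (d ^ 2 / (4 * t)) := by
          apply mul_le_mul_of_nonneg_left _ (by positivity)
          rw [← hdd]; exact hsin
      _ = d ^ 2 := by field_simp
  -- combine
  have hpair_nonneg : (0:ℝ) ≤ ∏ k : Fin n, ∏ l ∈ Finset.Ioi k,
      (t * (2 - 2 * Real.cos ((x k - x l) / Real.sqrt t))) := by
    apply Finset.prod_nonneg; intro k _
    apply Finset.prod_nonneg; intro l _
    apply mul_nonneg ht0.le
    nlinarith [Real.cos_le_one ((x k - x l) / Real.sqrt t)]
  have step1 : Real.exp (∑ j, 2 * t * (Real.cos (x j / Real.sqrt t) - 1)) *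
      ∏ k : Fin n, ∏ l ∈ Finset.Ioi k, (t * (2 - 2 * Real.cos ((x k - x l) / Real.sqrt t)))
      ≤ Real.exp (-(4 / Real.pi ^ 2) * S) *
        ∏ k : Fin n, ∏ l ∈ Finset.Ioi k, (x k - x l) ^ 2 :=
    mul_le_mul hexp hpair hpair_nonneg (Real.exp_pos _).le
  refine le_trans step1 ?_
  -- now bound the polynomial by the exponential
  have hprod_le : ∏ k : Fin n, ∏ l ∈ Finset.Ioi k, (x k - x l) ^ 2 ≤ (4 * S) ^ NN n := by
    have hconst : (4 * S) ^ NN n = ∏ k : Fin n, ∏ l ∈ Finset.Ioi k, (4 * S) := by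
      rw [NN, ← Finset.prod_pow_eq_pow_sum]
      exact Finset.prod_congr rfl fun k _ => (Finset.prod_const _).symm
    rw [hconst]
    apply Finset.prod_le_prod
    · intro k _
      exact Finset.prod_nonneg fun l _ => sq_nonneg _
    intro k _
    apply Finset.prod_le_prod
    · intro l _; exact sq_nonneg _
    intro l _
    have hk : x k ^ 2 ≤ S :=
      Finset.single_le_sum (f := fun j => x j ^ 2) (fun j _ => sq_nonneg _) (Finset.mem_univ k)
    have hl : x l ^ 2 ≤ S :=
      Finset.single_le_sum (f := fun j => x j ^ 2) (fun j _ => sq_nonneg _) (Finset.mem_univ l)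
    have hsq2 : (x k - x l) ^ 2 ≤ 2 * (x k ^ 2 + x l ^ 2) := by
      nlinarith [sq_nonneg (x k + x l)]
    linarith
  have hyexp : (4 * S) ^ NN n
      ≤ (2 * Real.pi ^ 2) ^ NN n * (NN n).factorial * Real.exp ((2 / Real.pi ^ 2) * S) := by
    have hy : (0:ℝ) ≤ (2 / Real.pi ^ 2) * S := by positivity
    have h1 : ((2 / Real.pi ^ 2) * S) ^ NN n / (NN n).factorial
        ≤ Real.exp ((2 / Real.pi ^ 2) * S) := by
      refine le_trans ?_ (Real.sum_le_exp_of_nonneg hy (NN n + 1))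
      refine Finset.single_le_sum (f := fun i => ((2 / Real.pi ^ 2) * S) ^ i / i.factorial)
        (fun i _ => by positivity) ?_
      exact Finset.mem_range.2 (Nat.lt_succ_self _)
    have h2 : (4 * S) = (2 * Real.pi ^ 2) * ((2 / Real.pi ^ 2) * S) := by
      field_simp
      ring
    calc (4 * S) ^ NN n = (2 * Real.pi ^ 2) ^ NN n * ((2 / Real.pi ^ 2) * S) ^ NN n := by
          rw [h2, mul_pow]
      _ ≤ (2 * Real.pi ^ 2) ^ NN n * ((NN n).factorial * Real.exp ((2 / Real.pi ^ 2) * S)) := by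
          apply mul_le_mul_of_nonneg_left _ (by positivity)
          rw [div_le_iff₀ (by exact_mod_cast Nat.factorial_pos (NN n))] at h1
          linarith [h1]
      _ = (2 * Real.pi ^ 2) ^ NN n * (NN n).factorial * Real.exp ((2 / Real.pi ^ 2) * S) := by
          ring
  calc Real.exp (-(4 / Real.pi ^ 2) * S) * ∏ k : Fin n, ∏ l ∈ Finset.Ioi k, (x k - x l) ^ 2
      ≤ Real.exp (-(4 / Real.pi ^ 2) * S) *
        ((2 * Real.pi ^ 2) ^ NN n * (NN n).factorial * Real.exp ((2 / Real.pi ^ 2) * S)) := by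
        apply mul_le_mul_of_nonneg_left _ (Real.exp_pos _).le
        exact le_trans hprod_le hyexp
    _ = ((2 * Real.pi ^ 2) ^ NN n * (NN n).factorial) *
        (Real.exp (-(4 / Real.pi ^ 2) * S) * Real.exp ((2 / Real.pi ^ 2) * S)) := by ring
    _ = boundFun n x := by
        rw [← Real.exp_add, boundFun]
        congr 1
        rw [← Real.exp_sum]
        congr 1
        have hsum : ∑ j : Fin n, -(2 / Real.pi ^ 2) * x j ^ 2 = -(2 / Real.pi ^ 2) * S := by
          rw [hS, Finset.mul_sum]
        rw [hsum]
        ring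

lemma integrable_boundFun (n : ℕ) : Integrable (boundFun n) := by
  apply Integrable.const_mul
  apply Integrable.fintype_prod (f := fun (_ : Fin n) (y : ℝ) => Real.exp (-(2 / Real.pi ^ 2) * y ^ 2))
  intro i
  exact integrable_exp_neg_mul_sq (by positivity)

lemma phi_pointwise (n : ℕ) (x : Fin n → ℝ) :
    Tendsto (fun t => Phi n t x) atTop (nhds (limFun n x)) := by
  have hinner : Tendsto (fun t => innerFun n t x) atTop (nhds (limFun n x)) := by
    rw [limFun]
    apply Tendsto.mul
    · have hsum : Tendsto (fun t => ∑ j, 2 * t * (Real.cos (x j / Real.sqrt t) - 1)) atTop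
          (nhds (∑ j, -(x j ^ 2))) :=
        tendsto_finset_sum _ fun j _ => exp_term_tendsto (x j)
      have := (Real.continuous_exp.tendsto _).comp hsum
      rw [show ∑ j, -(x j ^ 2) = -∑ j, x j ^ 2 by rw [Finset.sum_neg_distrib]] at this
      exact this
    · exact tendsto_finset_prod _ fun k _ => tendsto_finset_prod _ fun l _ =>
        pair_term_tendsto (x k - x l)
  have hev : ∀ᶠ t : ℝ in atTop, Phi n t x = innerFun n t x := by
    have hj : ∀ j : Fin n, ∀ᶠ t : ℝ in atTop,
        x j ∈ Set.Icc (-(Real.pi * Real.sqrt t)) (Real.pi * Real.sqrt t) := by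
      intro j
      have hsqrt : Tendsto (fun t : ℝ => Real.pi * Real.sqrt t) atTop atTop :=
        sqrt_tendsto_atTop.const_mul_atTop Real.pi_pos
      filter_upwards [hsqrt.eventually_ge_atTop |x j|] with t ht
      rw [Set.mem_Icc]
      constructor
      · linarith [neg_abs_le (x j)]
      · linarith [le_abs_self (x j)]
    filter_upwards [eventually_all.2 hj] with t ht
    exact Set.indicator_of_mem (show x ∈ bigBox n t from fun j _ => ht j) _
  exact hinner.congr' (hev.mono fun t h => h.symm)

lemma phi_integral_tendsto (n : ℕ) :
    Tendsto (fun t => ∫ x : Fin n → ℝ, Phi n t x) atTop (nhds (∫ x, limFun n x)) := by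
  apply tendsto_integral_filter_of_dominated_convergence (boundFun n)
  · filter_upwards with t
    exact ((measurable_innerFun n t).indicator (measurableSet_bigBox n t)).aestronglyMeasurable
  · filter_upwards [eventually_ge_atTop (1:ℝ)] with t ht
    exact Eventually.of_forall fun x => phi_le_bound n ht x
  · exact integrable_boundFun n
  · exact Eventually.of_forall fun x => phi_pointwise n x

lemma limFun_integral (n : ℕ) :
    ∫ x : Fin n → ℝ, limFun n x
      = ((Real.sqrt 2) ^ n)⁻¹ * ((1/2) ^ NN n *
          ((n.factorial : ℝ) * ∏ i : Fin n, ((i : ℕ).factorial * Real.sqrt (2 * Real.pi)))) := by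
  have h2 : (0:ℝ) ≤ Real.sqrt 2 := Real.sqrt_nonneg 2
  have hrank : Module.finrank ℝ (Fin n → ℝ) = n := by
    rw [Module.finrank_fintype_fun_eq_card, Fintype.card_fin]
  have hscale := Measure.integral_comp_inv_smul_of_nonneg (volume : Measure (Fin n → ℝ))
    (limFun n) h2
  rw [hrank] at hscale
  have hpt : ∀ x : Fin n → ℝ, limFun n ((Real.sqrt 2)⁻¹ • x)
      = (1/2) ^ NN n *
        ((∏ k : Fin n, ∏ l ∈ Finset.Ioi k, (x l - x k) ^ 2) * ∏ i, gauss (x i)) := by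
    intro x
    have hc2 : ((Real.sqrt 2)⁻¹) ^ 2 = (1:ℝ)/2 := by
      rw [inv_pow, Real.sq_sqrt (by norm_num : (0:ℝ) ≤ 2)]
      norm_num
    rw [limFun]
    have hexp : Real.exp (-∑ j, ((Real.sqrt 2)⁻¹ • x) j ^ 2) = ∏ i, gauss (x i) := by
      have : ∀ j, ((Real.sqrt 2)⁻¹ • x) j ^ 2 = x j ^ 2 / 2 := by
        intro j
        rw [Pi.smul_apply, smul_eq_mul, mul_pow, hc2]
        ring
      rw [show (∑ j, ((Real.sqrt 2)⁻¹ • x) j ^ 2) = ∑ j, x j ^ 2 / 2 from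
        Finset.sum_congr rfl fun j _ => this j]
      rw [show (-∑ j : Fin n, x j ^ 2 / 2) = ∑ j : Fin n, -(x j ^ 2 / 2) from
        (Finset.sum_neg_distrib _).symm]
      rw [Real.exp_sum]
      rfl
    have hpair : ∏ k : Fin n, ∏ l ∈ Finset.Ioi k, (((Real.sqrt 2)⁻¹ • x) k - ((Real.sqrt 2)⁻¹ • x) l) ^ 2
        = (1/2) ^ NN n * ∏ k : Fin n, ∏ l ∈ Finset.Ioi k, (x l - x k) ^ 2 := by
      have hfac : ∀ k l : Fin n, (((Real.sqrt 2)⁻¹ • x) k - ((Real.sqrt 2)⁻¹ • x) l) ^ 2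
          = (1/2) * (x l - x k) ^ 2 := by
        intro k l
        rw [Pi.smul_apply, Pi.smul_apply, smul_eq_mul, smul_eq_mul]
        rw [show (Real.sqrt 2)⁻¹ * x k - (Real.sqrt 2)⁻¹ * x l
            = (Real.sqrt 2)⁻¹ * (x k - x l) from by ring]
        rw [mul_pow, hc2]
        ring
      rw [show (∏ k : Fin n, ∏ l ∈ Finset.Ioi k,
          (((Real.sqrt 2)⁻¹ • x) k - ((Real.sqrt 2)⁻¹ • x) l) ^ 2)
          = ∏ k : Fin n, ∏ l ∈ Finset.Ioi k, ((1/2) * (x l - x k) ^ 2) from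
        Finset.prod_congr rfl fun k _ => Finset.prod_congr rfl fun l _ => hfac k l]
      have hconst : ((1:ℝ)/2) ^ NN n = ∏ k : Fin n, ∏ l ∈ Finset.Ioi k, ((1:ℝ)/2) := by
        rw [NN, ← Finset.prod_pow_eq_pow_sum]
        exact Finset.prod_congr rfl fun k _ => (Finset.prod_const _).symm
      rw [hconst, ← Finset.prod_mul_distrib]
      exact Finset.prod_congr rfl fun k _ => by rw [← Finset.prod_mul_distrib]
    rw [hexp, hpair]
    ring
  rw [show (fun x : Fin n → ℝ => limFun n ((Real.sqrt 2)⁻¹ • x))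
      = fun x : Fin n → ℝ => (1/2) ^ NN n *
        ((∏ k : Fin n, ∏ l ∈ Finset.Ioi k, (x l - x k) ^ 2) * ∏ i, gauss (x i)) from
    funext hpt] at hscale
  rw [MeasureTheory.integral_const_mul, mehta] at hscale
  have hpos : (0:ℝ) < (Real.sqrt 2) ^ n := by
    apply pow_pos
    rw [show (0:ℝ) = Real.sqrt 0 from (Real.sqrt_zero).symm]
    exact Real.sqrt_lt_sqrt le_rfl (by norm_num)
  rw [smul_eq_mul] at hscale
  field_simp at hscale ⊢
  simp only [mul_comm (Real.sqrt (2 * Real.pi))]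
  linarith [hscale]

/-- For fixed `L ≥ 1`, `t^{L²/2}·e^{-2tL}·D_L(t)` converges as `t → ∞` to
`(2π)^{-L}·π^{L/2}·2^{-L(L-1)/2}·∏_{q=0}^{L-1} q!` (the Selberg/Gaussian limit). -/
theorem toeplitzD_selberg_limit (L : ℕ) (hL : 1 ≤ L) :
    Tendsto (fun t : ℝ => t ^ ((L : ℝ) ^ 2 / 2) * Real.exp (-2 * t * L) * toeplitzD L t)
      atTop
      (nhds ((2 * Real.pi) ^ (-(L : ℝ)) * Real.pi ^ ((L : ℝ) / 2)
        * (2 : ℝ) ^ (-((L : ℝ) * ((L : ℝ) - 1)) / 2)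
        * ∏ q ∈ Finset.range L, (q.factorial : ℝ))) := by
  have hT := (phi_integral_tendsto L).const_mul (1 / ((2 * Real.pi) ^ L * (L.factorial : ℝ)))
  have heq : (fun t : ℝ => (1 / ((2 * Real.pi) ^ L * (L.factorial : ℝ)))
        * ∫ x : Fin L → ℝ, Phi L t x)
      =ᶠ[atTop] fun t : ℝ => t ^ ((L : ℝ) ^ 2 / 2) * Real.exp (-2 * t * L) * toeplitzD L t := by
    filter_upwards [eventually_gt_atTop (0:ℝ)] with t ht
    exact (main_eq L ht).symm
  have hT2 := hT.congr' heq
  -- identify the constant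
  have hval : (1 / ((2 * Real.pi) ^ L * (L.factorial : ℝ))) * ∫ x, limFun L x
      = (2 * Real.pi) ^ (-(L : ℝ)) * Real.pi ^ ((L : ℝ) / 2)
        * (2 : ℝ) ^ (-((L : ℝ) * ((L : ℝ) - 1)) / 2)
        * ∏ q ∈ Finset.range L, (q.factorial : ℝ) := by
    rw [limFun_integral]
    have hπ := Real.pi_pos
    -- rewrite the rpow's
    have e1 : (2 * Real.pi) ^ (-(L : ℝ)) = (((2 * Real.pi) ^ L : ℝ))⁻¹ := by
      rw [Real.rpow_neg (by positivity), Real.rpow_natCast]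
    have e2 : Real.pi ^ ((L : ℝ) / 2) = (Real.sqrt Real.pi) ^ L := by
      rw [Real.sqrt_eq_rpow, ← Real.rpow_natCast (Real.pi ^ ((1:ℝ)/2)) L,
        ← Real.rpow_mul hπ.le]
      congr 1
      ring
    have e3 : (2 : ℝ) ^ (-((L : ℝ) * ((L : ℝ) - 1)) / 2) = (((2:ℝ) ^ NN L))⁻¹ := by
      have hcast : ((NN L : ℕ) : ℝ) = (L : ℝ) * ((L : ℝ) - 1) / 2 := by
        have h2 := two_NN L
        have hc := congrArg (fun m : ℕ => (m : ℝ)) h2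
        push_cast [Nat.cast_sub hL] at hc
        linarith
      rw [show -((L : ℝ) * ((L : ℝ) - 1)) / 2 = -((L : ℝ) * ((L : ℝ) - 1) / 2) from by ring,
        ← hcast, Real.rpow_neg (by norm_num), Real.rpow_natCast]
    rw [e1, e2, e3]
    -- product splitting
    have e4 : ∏ i : Fin L, (((i : ℕ).factorial : ℝ) * Real.sqrt (2 * Real.pi))
        = (∏ q ∈ Finset.range L, (q.factorial : ℝ)) * (Real.sqrt 2 * Real.sqrt Real.pi) ^ L := by
      rw [Finset.prod_mul_distrib, Finset.prod_const, Finset.card_univ, Fintype.card_fin,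
        Fin.prod_univ_eq_prod_range (fun q => ((q.factorial : ℕ) : ℝ)) L,
        Real.sqrt_mul (by norm_num : (0:ℝ) ≤ 2)]
    rw [e4]
    have hs2 : Real.sqrt 2 ≠ 0 := by positivity
    have hcancel : ((Real.sqrt 2) ^ L)⁻¹ * (Real.sqrt 2 * Real.sqrt Real.pi) ^ L
        = (Real.sqrt Real.pi) ^ L := by
      rw [mul_pow, ← mul_assoc, inv_mul_cancel₀ (pow_ne_zero _ hs2), one_mul]
    have hfac : (L.factorial : ℝ) ≠ 0 := by positivity
    have h2πL : ((2 * Real.pi) ^ L : ℝ) ≠ 0 := by positivity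
    field_simp
    ring_nf
    simp
  rw [hval] at hT2
  exact hT2
end

section
/- Let 0 < θ_c < π and let γ = 1/sin²(θ_c/2). Then for every θ with θ_c ≤ θ ≤ π, γ · ∫_{θ_c}^{θ} cos(φ/2) · √(sin((φ+θ_c)/2)) · √(sin((φ−θ_c)/2)) dφ ≥ (1/(12π)) · √(γ(γ−1)) · (θ − θ_c)². -/
open MeasureTheory Filter Real intervalIntegral

/-- Lemma 3.4 of Baik–Buckingham–DiFranco: the lower bound
`α(e^{iθ}) ≥ (1/(12π))·√(γ(γ-1))·(θ-θ_c)²` for `θ_c ≤ θ ≤ π`, where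
`γ = 1/sin²(θ_c/2)`. -/
theorem alpha_lower_bound
    (θc : ℝ) (hθc0 : 0 < θc) (hθcπ : θc < Real.pi)
    (γ : ℝ) (hγ : γ = 1 / Real.sin (θc / 2) ^ 2)
    (θ : ℝ) (hθ1 : θc ≤ θ) (hθ2 : θ ≤ Real.pi) :
    (1 / (12 * Real.pi)) * Real.sqrt (γ * (γ - 1)) * (θ - θc) ^ 2
      ≤ γ * ∫ φ in θc..θ,
          Real.cos (φ / 2) * Real.sqrt (Real.sin ((φ + θc) / 2))
            * Real.sqrt (Real.sin ((φ - θc) / 2)) := by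
  have hπ : (0:ℝ) < Real.pi := Real.pi_pos
  set s := Real.sin (θc / 2) with hs_def
  set c := Real.cos (θc / 2) with hc_def
  have hs : 0 < s := Real.sin_pos_of_pos_of_lt_pi (by linarith) (by linarith)
  have hc : 0 < c := Real.cos_pos_of_mem_Ioo ⟨by linarith, by linarith⟩
  have hsc : s ^ 2 + c ^ 2 = 1 := Real.sin_sq_add_cos_sq _
  have hγpos : 0 < γ := by rw [hγ]; positivity
  -- √(γ(γ-1)) = γ c
  have hsqrt : Real.sqrt (γ * (γ - 1)) = γ * c := by
    have h1 : γ * (γ - 1) = (γ * c) ^ 2 := by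
      rw [hγ]; field_simp; nlinarith [hsc]
    rw [h1, Real.sqrt_sq (by positivity)]
  rw [hsqrt]
  -- pointwise lower bound on the integrand
  have key : ∀ φ ∈ Set.Icc θc θ,
      (Real.pi - φ) * (φ - θc) / Real.pi ^ 2
        ≤ Real.cos (φ / 2) * Real.sqrt (Real.sin ((φ + θc) / 2))
            * Real.sqrt (Real.sin ((φ - θc) / 2)) := by
    intro φ ⟨h1, h2⟩
    have hφπ : φ ≤ Real.pi := le_trans h2 hθ2
    have hcos : (Real.pi - φ) / Real.pi ≤ Real.cos (φ / 2) := by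
      have := Real.mul_le_sin (x := (Real.pi - φ) / 2) (by linarith) (by linarith)
      have heq : Real.sin ((Real.pi - φ) / 2) = Real.cos (φ / 2) := by
        rw [show (Real.pi - φ) / 2 = Real.pi / 2 - φ / 2 by ring,
          Real.sin_pi_div_two_sub]
      rw [heq] at this
      calc (Real.pi - φ) / Real.pi = 2 / Real.pi * ((Real.pi - φ) / 2) := by
            field_simp
        _ ≤ Real.cos (φ / 2) := this
    have hb0 : 0 ≤ Real.sin ((φ - θc) / 2) :=
      Real.sin_nonneg_of_nonneg_of_le_pi (by linarith) (by linarith)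
    have hba : Real.sin ((φ - θc) / 2) ≤ Real.sin ((φ + θc) / 2) := by
      have := Real.sin_sub_sin ((φ + θc) / 2) ((φ - θc) / 2)
      have h3 : ((φ + θc) / 2 - (φ - θc) / 2) / 2 = θc / 2 := by ring
      have h4 : ((φ + θc) / 2 + (φ - θc) / 2) / 2 = φ / 2 := by ring
      rw [h3, h4] at this
      have hcφ : 0 ≤ Real.cos (φ / 2) :=
        Real.cos_nonneg_of_mem_Icc ⟨by linarith, by linarith⟩
      nlinarith [hs.le]
    have hsin_lb : (φ - θc) / Real.pi ≤ Real.sin ((φ - θc) / 2) := by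
      have := Real.mul_le_sin (x := (φ - θc) / 2) (by linarith) (by linarith)
      calc (φ - θc) / Real.pi = 2 / Real.pi * ((φ - θc) / 2) := by
            field_simp
        _ ≤ _ := this
    have hprod : Real.sin ((φ - θc) / 2)
        ≤ Real.sqrt (Real.sin ((φ + θc) / 2)) * Real.sqrt (Real.sin ((φ - θc) / 2)) := by
      have h5 : Real.sqrt (Real.sin ((φ - θc) / 2)) ≤ Real.sqrt (Real.sin ((φ + θc) / 2)) :=
        Real.sqrt_le_sqrt hba
      nlinarith [Real.mul_self_sqrt hb0, Real.sqrt_nonneg (Real.sin ((φ - θc) / 2))]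
    have hcφ0 : 0 ≤ Real.cos (φ / 2) :=
      Real.cos_nonneg_of_mem_Icc ⟨by linarith, by linarith⟩
    have hAB : (Real.pi - φ) / Real.pi * ((φ - θc) / Real.pi)
        ≤ Real.cos (φ / 2) * (Real.sqrt (Real.sin ((φ + θc) / 2))
            * Real.sqrt (Real.sin ((φ - θc) / 2))) := by
      exact mul_le_mul hcos (le_trans hsin_lb hprod)
        (div_nonneg (by linarith) hπ.le) hcφ0
    calc (Real.pi - φ) * (φ - θc) / Real.pi ^ 2
        = (Real.pi - φ) / Real.pi * ((φ - θc) / Real.pi) := by ring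
      _ ≤ _ := hAB
      _ = _ := by ring
  -- integrability
  have hint1 : IntervalIntegrable
      (fun φ => (Real.pi - φ) * (φ - θc) / Real.pi ^ 2) volume θc θ :=
    (Continuous.intervalIntegrable (by fun_prop) θc θ)
  have hint2 : IntervalIntegrable
      (fun φ => Real.cos (φ / 2) * Real.sqrt (Real.sin ((φ + θc) / 2))
        * Real.sqrt (Real.sin ((φ - θc) / 2))) volume θc θ := by
    exact Continuous.intervalIntegrable (by fun_prop) θc θ
  have hmono := intervalIntegral.integral_mono_on hθ1 hint1 hint2 key
  -- compute the polynomial integral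
  have hval : ∫ φ in θc..θ, (Real.pi - φ) * (φ - θc) / Real.pi ^ 2
      = ((Real.pi - θc) * (θ - θc) ^ 2 / 2 - (θ - θc) ^ 3 / 3) / Real.pi ^ 2 := by
    have hder : ∀ x ∈ Set.uIcc θc θ,
        HasDerivAt (fun x : ℝ => (Real.pi / 2 * x ^ 2 - x ^ 3 / 3
          - Real.pi * θc * x + θc / 2 * x ^ 2) / Real.pi ^ 2)
          ((Real.pi - x) * (x - θc) / Real.pi ^ 2) x := by
      intro x _
      have h1 : HasDerivAt (fun x : ℝ => x ^ 2) (2 * x) x := by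
        simpa using hasDerivAt_pow 2 x
      have h2 : HasDerivAt (fun x : ℝ => x ^ 3) (3 * x ^ 2) x := by
        simpa using hasDerivAt_pow 3 x
      have h := ((((h1.const_mul (Real.pi / 2)).sub (h2.div_const 3)).sub
        ((hasDerivAt_id x).const_mul (Real.pi * θc))).add
        (h1.const_mul (θc / 2))).div_const (Real.pi ^ 2)
      exact (h.congr_deriv (by ring)).congr_of_eventuallyEq (Filter.Eventually.of_forall fun y => by simp)
    rw [intervalIntegral.integral_eq_sub_of_hasDerivAt hder hint1]
    field_simp
    ring
  rw [hval] at hmono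
  -- final arithmetic
  have hcA : c ≤ (Real.pi - θc) / 2 := by
    have h1 : Real.sin ((Real.pi - θc) / 2) ≤ (Real.pi - θc) / 2 :=
      Real.sin_le (by linarith)
    have h2 : Real.sin ((Real.pi - θc) / 2) = c := by
      rw [show (Real.pi - θc) / 2 = Real.pi / 2 - θc / 2 by ring,
        Real.sin_pi_div_two_sub]
    linarith [h2 ▸ h1]
  have hL0 : 0 ≤ θ - θc := by linarith
  have hLA : θ - θc ≤ Real.pi - θc := by linarith
  have hπ4 : Real.pi ≤ 4 := Real.pi_le_four
  have hfinal : 1 / (12 * Real.pi) * (γ * c) * (θ - θc) ^ 2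
      ≤ γ * (((Real.pi - θc) * (θ - θc) ^ 2 / 2 - (θ - θc) ^ 3 / 3) / Real.pi ^ 2) := by
    have hA : 0 < Real.pi - θc := by linarith
    have h1 : 0 ≤ γ * (θ - θc) ^ 2 * Real.pi ^ 2 * ((Real.pi - θc) / 2 - c) :=
      mul_nonneg (by positivity) (by linarith)
    have h2 : 0 ≤ 4 * Real.pi * γ * (θ - θc) ^ 2 * ((Real.pi - θc) - (θ - θc)) :=
      mul_nonneg (by positivity) (by linarith)
    have h3 : 0 ≤ γ * (Real.pi - θc) * (θ - θc) ^ 2 * Real.pi * (4 - Real.pi) / 2 := by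
      apply div_nonneg _ (by norm_num)
      exact mul_nonneg (by positivity) (by linarith)
    have key2 : (γ * c) * (θ - θc) ^ 2 * Real.pi ^ 2
        ≤ γ * ((Real.pi - θc) * (θ - θc) ^ 2 / 2 - (θ - θc) ^ 3 / 3) * (12 * Real.pi) := by
      linarith [h1, h2, h3]
    have e1 : 1 / (12 * Real.pi) * (γ * c) * (θ - θc) ^ 2
        = ((γ * c) * (θ - θc) ^ 2) / (12 * Real.pi) := by ring
    have e2 : γ * (((Real.pi - θc) * (θ - θc) ^ 2 / 2 - (θ - θc) ^ 3 / 3) / Real.pi ^ 2)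
        = (γ * ((Real.pi - θc) * (θ - θc) ^ 2 / 2 - (θ - θc) ^ 3 / 3)) / Real.pi ^ 2 := by
      ring
    rw [e1, e2, div_le_div_iff₀ (by positivity) (by positivity)]
    exact key2
  calc 1 / (12 * Real.pi) * (γ * c) * (θ - θc) ^ 2
      ≤ γ * (((Real.pi - θc) * (θ - θc) ^ 2 / 2 - (θ - θc) ^ 3 / 3) / Real.pi ^ 2) := hfinal
    _ ≤ γ * ∫ φ in θc..θ, Real.cos (φ / 2) * Real.sqrt (Real.sin ((φ + θc) / 2))
          * Real.sqrt (Real.sin ((φ - θc) / 2)) := by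
        exact mul_le_mul_of_nonneg_left hmono hγpos.le
end

section
/- Fix an integer L ≥ 1. For every ε > 0 there exists M₀ > 0 such that for all M ≥ M₀, limsup_{t→∞} Σ_{q=L+1}^{⌊2t − M t^{1/3} − 1⌋} (2t)²/(q^{3/2}(2t−q)^{5/2}) ≤ ε; that is, lim_{M→∞} limsup_{t→∞} of this sum equals 0. -/
open MeasureTheory Filter Real

private lemma sum_tele (g : ℤ → ℝ) (a : ℤ) : ∀ b : ℤ, a ≤ b →
    ∑ i ∈ Finset.Icc a b, (g (i - 1) - g i) = g (a - 1) - g b := by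
  refine fun b => Int.le_induction
    (motive := fun b _ => ∑ i ∈ Finset.Icc a b, (g (i - 1) - g i) = g (a - 1) - g b) ?_ ?_ b
  · show ∑ i ∈ Finset.Icc a a, (g (i - 1) - g i) = g (a - 1) - g a
    rw [Finset.Icc_self, Finset.sum_singleton]
  · intro n hn ih
    show ∑ i ∈ Finset.Icc a (n+1), (g (i - 1) - g i) = g (a - 1) - g (n+1)
    have hins : Finset.Icc a (n + 1) = insert (n + 1) (Finset.Icc a n) := by
      ext x; simp only [Finset.mem_Icc, Finset.mem_insert]; omega
    rw [hins, Finset.sum_insert (by simp only [Finset.mem_Icc]; omega), ih]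
    have h1 : (n + 1 - 1 : ℤ) = n := by ring
    rw [h1]; ring

private lemma sum_tele' (g : ℤ → ℝ) (a : ℤ) (b : ℤ) (hb : a ≤ b) :
    ∑ i ∈ Finset.Icc a b, (g i - g (i - 1)) = g b - g (a - 1) := by
  have h := sum_tele (fun i => -g i) a b hb
  simp only [neg_sub_neg] at h
  linarith [h]

private lemma rpow_three_halves {x : ℝ} (hx : 0 < x) : x ^ ((3:ℝ)/2) = x * Real.sqrt x := by
  rw [show (3:ℝ)/2 = 1 + 1/2 by norm_num, Real.rpow_add hx, Real.rpow_one, Real.sqrt_eq_rpow]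

private lemma rpow_five_halves {x : ℝ} (hx : 0 < x) : x ^ ((5:ℝ)/2) = x ^ 2 * Real.sqrt x := by
  rw [show (5:ℝ)/2 = ((2:ℕ):ℝ) + 1/2 by norm_num, Real.rpow_add hx, Real.rpow_natCast,
    Real.sqrt_eq_rpow]

private lemma inv_q_sqrt_bound {q : ℝ} (hq : 2 ≤ q) :
    1 / (q * Real.sqrt q) ≤ 2 * (1 / Real.sqrt (q - 1) - 1 / Real.sqrt q) := by
  have h1 : (0:ℝ) < q - 1 := by linarith
  have h0 : (0:ℝ) < q := by linarith
  have hu0 : 0 < Real.sqrt (q - 1) := Real.sqrt_pos.mpr h1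
  have hv0 : 0 < Real.sqrt q := Real.sqrt_pos.mpr h0
  have hu2 : Real.sqrt (q - 1) ^ 2 = q - 1 := Real.sq_sqrt h1.le
  have hv2 : Real.sqrt q ^ 2 = q := Real.sq_sqrt h0.le
  have huv : Real.sqrt (q - 1) ≤ Real.sqrt q := Real.sqrt_le_sqrt (by linarith)
  set u := Real.sqrt (q - 1) with hu
  set v := Real.sqrt q with hv
  have hq' : q = v ^ 2 := hv2.symm
  rw [div_sub_div _ _ hu0.ne' hv0.ne', one_mul, mul_one, ← mul_div_assoc, hq',
    div_le_div_iff₀ (by positivity) (by positivity)]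
  -- goal : 1 * (u * v) ≤ 2 * (v - u) * (v ^ 2 * v)
  nlinarith [mul_pos hu0 hv0, sq_nonneg (v - u), mul_nonneg (sub_nonneg.mpr huv) (sq_nonneg v),
    mul_pos (mul_pos hu0 hu0) hv0, hu2, mul_nonneg (mul_nonneg (sub_nonneg.mpr huv) hv0.le) hv0.le]

private noncomputable def Gfun : ℤ → ℝ := fun i => 1 / Real.sqrt (i : ℝ)

private noncomputable def Hfun (t : ℝ) : ℤ → ℝ := fun i => 1 / (2 * t - (i : ℝ) - 1)

set_option maxHeartbeats 1000000 in
/-- Lemma 3.7, first limit: for fixed `L ≥ 1`,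
`lim_{M→∞} limsup_{t→∞} Σ_{q=L+1}^{⌊2t - Mt^{1/3} - 1⌋} (2t)²/(q^{3/2}(2t-q)^{5/2}) = 0`. -/
theorem sum_q_three_half_vanishes (L : ℕ) (hL : 1 ≤ L) :
    ∀ ε : ℝ, 0 < ε → ∃ M₀ : ℝ, 0 < M₀ ∧ ∀ M : ℝ, M₀ ≤ M →
      Filter.limsup (fun t : ℝ =>
          ∑ q ∈ Finset.Icc ((L : ℤ) + 1) ⌊2 * t - M * t ^ ((1 : ℝ) / 3) - 1⌋,
            (2 * t) ^ 2 / ((q : ℝ) ^ ((3 : ℝ) / 2) * (2 * t - (q : ℝ)) ^ ((5 : ℝ) / 2)))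
        atTop ≤ ε := by
  intro ε hε
  refine ⟨max 1 (8/ε), lt_of_lt_of_le one_pos (le_max_left _ _), ?_⟩
  intro M hM
  have hM1 : (1:ℝ) ≤ M := le_trans (le_max_left _ _) hM
  have hMε : 8/ε ≤ M := le_trans (le_max_right _ _) hM
  have hM0 : (0:ℝ) < M := lt_of_lt_of_le one_pos hM1
  have hL1 : (1:ℝ) ≤ (L:ℝ) := by exact_mod_cast hL
  -- nonnegativity (for coboundedness)
  have hnn : ∀ᶠ t in (atTop : Filter ℝ), 0 ≤
      ∑ q ∈ Finset.Icc ((L : ℤ) + 1) ⌊2 * t - M * t ^ ((1 : ℝ) / 3) - 1⌋,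
        (2 * t) ^ 2 / ((q : ℝ) ^ ((3 : ℝ) / 2) * (2 * t - (q : ℝ)) ^ ((5 : ℝ) / 2)) := by
    filter_upwards [eventually_ge_atTop (1:ℝ)] with t ht1
    apply Finset.sum_nonneg
    intro q hq
    rw [Finset.mem_Icc] at hq
    have ht0 : (0:ℝ) < t := lt_of_lt_of_le one_pos ht1
    have hs1 : (1:ℝ) ≤ t ^ ((1:ℝ)/3) := Real.one_le_rpow ht1 (by norm_num)
    have hq1 : ((L:ℤ)+1 : ℝ) ≤ (q:ℝ) := by exact_mod_cast hq.1
    have hq0 : (0:ℝ) ≤ (q:ℝ) := by push_cast at hq1; linarith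
    have hq2 : (q:ℝ) ≤ 2*t - M * t ^ ((1:ℝ)/3) - 1 :=
      le_trans (by exact_mod_cast hq.2) (Int.floor_le _)
    have hr0 : (0:ℝ) ≤ 2*t - (q:ℝ) := by nlinarith
    exact div_nonneg (by positivity)
      (mul_nonneg (Real.rpow_nonneg hq0 _) (Real.rpow_nonneg hr0 _))
  -- the eventual bound
  have hev : ∀ᶠ t in (atTop : Filter ℝ),
      (∑ q ∈ Finset.Icc ((L : ℤ) + 1) ⌊2 * t - M * t ^ ((1 : ℝ) / 3) - 1⌋,
        (2 * t) ^ 2 / ((q : ℝ) ^ ((3 : ℝ) / 2) * (2 * t - (q : ℝ)) ^ ((5 : ℝ) / 2))) ≤ ε := by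
    filter_upwards [eventually_ge_atTop (max (max 1 ((L:ℝ)+1)) (256/ε^2))] with t ht
    have ht1 : (1:ℝ) ≤ t := le_trans (le_trans (le_max_left _ _) (le_max_left _ _)) ht
    have htL : (L:ℝ)+1 ≤ t := le_trans (le_trans (le_max_right _ _) (le_max_left _ _)) ht
    have htε : 256/ε^2 ≤ t := le_trans (le_max_right _ _) ht
    have ht0 : (0:ℝ) < t := lt_of_lt_of_le one_pos ht1
    set s := t ^ ((1:ℝ)/3) with hsdef
    have hs1 : (1:ℝ) ≤ s := Real.one_le_rpow ht1 (by norm_num)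
    have hs0 : (0:ℝ) < s := lt_of_lt_of_le one_pos hs1
    have hMs : (1:ℝ) ≤ M * s := by nlinarith
    have hMs0 : (0:ℝ) < M * s := by nlinarith
    set N := ⌊2 * t - M * s - 1⌋ with hNdef
    have hNle : (N:ℝ) ≤ 2*t - M*s - 1 := Int.floor_le _
    -- key auxiliary facts about t, s
    have hsqt0 : 0 < Real.sqrt t := Real.sqrt_pos.mpr ht0
    have h3 : s ^ (3:ℕ) = t := by
      rw [hsdef, ← Real.rpow_natCast (t ^ ((1:ℝ)/3)) 3, ← Real.rpow_mul ht0.le]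
      norm_num
    have hsqs : Real.sqrt s * s = Real.sqrt t := by
      calc Real.sqrt s * s = Real.sqrt s * Real.sqrt (s^2) := by rw [Real.sqrt_sq hs0.le]
        _ = Real.sqrt (s * s^2) := (Real.sqrt_mul hs0.le _).symm
        _ = Real.sqrt t := by rw [show s * s^2 = s^(3:ℕ) by ring, h3]
    rcases lt_or_ge N ((L:ℤ)+1) with hlt | hge
    · rw [Finset.Icc_eq_empty (not_le.mpr hlt), Finset.sum_empty]
      linarith
    -- main case
    · have key : ∀ q ∈ Finset.Icc ((L:ℤ)+1) N,
          (2 * t) ^ 2 / ((q : ℝ) ^ ((3 : ℝ) / 2) * (2 * t - (q : ℝ)) ^ ((5 : ℝ) / 2)) ≤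
          8/Real.sqrt t * (Gfun (q-1) - Gfun q) +
            4*Real.sqrt t/Real.sqrt (M*s) * (Hfun t q - Hfun t (q-1)) := by
        intro q hq
        rw [Finset.mem_Icc] at hq
        have hq1 : ((L:ℤ)+1 : ℝ) ≤ (q:ℝ) := by exact_mod_cast hq.1
        push_cast at hq1
        have hq2 : (2:ℝ) ≤ (q:ℝ) := by linarith
        have hq0 : (0:ℝ) < (q:ℝ) := by linarith
        have hqub : (q:ℝ) ≤ 2*t - M*s - 1 := le_trans (by exact_mod_cast hq.2) hNle
        have hr1 : M*s + 1 ≤ 2*t - (q:ℝ) := by linarith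
        have hr2 : (2:ℝ) ≤ 2*t - (q:ℝ) := by linarith
        have hr0 : (0:ℝ) < 2*t - (q:ℝ) := by linarith
        have hsqq0 : 0 < Real.sqrt (q:ℝ) := Real.sqrt_pos.mpr hq0
        have hsqr0 : 0 < Real.sqrt (2*t - (q:ℝ)) := Real.sqrt_pos.mpr hr0
        rw [rpow_three_halves hq0, rpow_five_halves hr0]
        set r := 2*t - (q:ℝ) with hrdef
        have hGq : Gfun (q-1) - Gfun q = 1/Real.sqrt ((q:ℝ)-1) - 1/Real.sqrt (q:ℝ) := by
          simp only [Gfun]; push_cast; ring_nf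
        have hH : Hfun t q - Hfun t (q-1) = 1/(r-1) - 1/r := by
          simp only [Hfun]; push_cast; rw [hrdef]; ring_nf
        have hrm1 : (0:ℝ) < r - 1 := by linarith
        rcases le_total (q:ℝ) t with hcase | hcase
        · -- q ≤ t : use the G-telescoping term
          have hBnn : 0 ≤ 4*Real.sqrt t/Real.sqrt (M*s) * (Hfun t q - Hfun t (q-1)) := by
            apply mul_nonneg (by positivity)
            rw [hH]
            have := one_div_le_one_div_of_le hrm1 (by linarith : r - 1 ≤ r)
            linarith
          have hA2 : (2*t)^2/(((q:ℝ)*Real.sqrt (q:ℝ))*(r^2*Real.sqrt r)) ≤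
              8/Real.sqrt t * (Gfun (q-1) - Gfun q) := by
            have hrt : t ≤ r := by rw [hrdef]; linarith
            have hden : t^2*Real.sqrt t ≤ r^2*Real.sqrt r := by
              have ha : t^2 ≤ r^2 := by nlinarith
              exact mul_le_mul ha (Real.sqrt_le_sqrt hrt) (Real.sqrt_nonneg t) (by positivity)
            have hd2 : 0 < ((q:ℝ)*Real.sqrt (q:ℝ))*(t^2*Real.sqrt t) :=
              mul_pos (mul_pos hq0 hsqq0) (mul_pos (by positivity) hsqt0)
            have hstep1 : (2*t)^2/(((q:ℝ)*Real.sqrt (q:ℝ))*(r^2*Real.sqrt r)) ≤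
                (2*t)^2/(((q:ℝ)*Real.sqrt (q:ℝ))*(t^2*Real.sqrt t)) :=
              div_le_div_of_nonneg_left (by positivity) hd2
                (mul_le_mul_of_nonneg_left hden (mul_pos hq0 hsqq0).le)
            have heq1 : (2*t)^2/(((q:ℝ)*Real.sqrt (q:ℝ))*(t^2*Real.sqrt t)) =
                4/Real.sqrt t * (1/((q:ℝ)*Real.sqrt (q:ℝ))) := by
              rw [div_mul_div_comm, mul_one, div_eq_div_iff hd2.ne' (by positivity)]
              ring
            have hcb := inv_q_sqrt_bound hq2
            rw [hGq]
            calc (2*t)^2/(((q:ℝ)*Real.sqrt (q:ℝ))*(r^2*Real.sqrt r)) ≤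
                (2*t)^2/(((q:ℝ)*Real.sqrt (q:ℝ))*(t^2*Real.sqrt t)) := hstep1
              _ = 4/Real.sqrt t * (1/((q:ℝ)*Real.sqrt (q:ℝ))) := heq1
              _ ≤ 4/Real.sqrt t * (2*(1/Real.sqrt ((q:ℝ)-1) - 1/Real.sqrt (q:ℝ))) :=
                  mul_le_mul_of_nonneg_left hcb (by positivity)
              _ = 8/Real.sqrt t * (1/Real.sqrt ((q:ℝ)-1) - 1/Real.sqrt (q:ℝ)) := by ring
          linarith
        · -- t ≤ q : use the H-telescoping term
          have hAnn : 0 ≤ 8/Real.sqrt t * (Gfun (q-1) - Gfun q) := by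
            apply mul_nonneg (by positivity)
            rw [hGq]
            have hqm1 : (0:ℝ) < Real.sqrt ((q:ℝ)-1) := Real.sqrt_pos.mpr (by linarith)
            have := one_div_le_one_div_of_le hqm1 (Real.sqrt_le_sqrt (by linarith : (q:ℝ)-1 ≤ (q:ℝ)))
            linarith
          have hB2 : (2*t)^2/(((q:ℝ)*Real.sqrt (q:ℝ))*(r^2*Real.sqrt r)) ≤
              4*Real.sqrt t/Real.sqrt (M*s) * (Hfun t q - Hfun t (q-1)) := by
            rw [hH]
            have h1 : t*Real.sqrt t ≤ (q:ℝ)*Real.sqrt (q:ℝ) :=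
              mul_le_mul hcase (Real.sqrt_le_sqrt hcase) (Real.sqrt_nonneg t) hq0.le
            have hdt : 0 < (t*Real.sqrt t)*(r^2*Real.sqrt r) :=
              mul_pos (mul_pos ht0 hsqt0) (mul_pos (by positivity) hsqr0)
            have hstep1 : (2*t)^2/(((q:ℝ)*Real.sqrt (q:ℝ))*(r^2*Real.sqrt r)) ≤
                (2*t)^2/((t*Real.sqrt t)*(r^2*Real.sqrt r)) :=
              div_le_div_of_nonneg_left (by positivity) hdt
                (mul_le_mul_of_nonneg_right h1 (by positivity))
            have heq1 : (2*t)^2/((t*Real.sqrt t)*(r^2*Real.sqrt r)) =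
                4*Real.sqrt t * (1/(r^2*Real.sqrt r)) := by
              rw [mul_one_div, div_eq_div_iff hdt.ne' (mul_pos (by positivity) hsqr0).ne']
              nlinarith [Real.mul_self_sqrt ht0.le]
            have hx1 : 1/(r^2*Real.sqrt r) = (1/Real.sqrt r)*(1/r^2) := by
              rw [div_mul_div_comm, one_mul, mul_comm]
            have h2 : 1/Real.sqrt r ≤ 1/Real.sqrt (M*s) :=
              one_div_le_one_div_of_le (Real.sqrt_pos.mpr hMs0)
                (Real.sqrt_le_sqrt (by linarith : M*s ≤ r))
            have h3 : 1/r^2 ≤ 1/(r-1) - 1/r := by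
              rw [div_sub_div _ _ hrm1.ne' (by linarith : r ≠ 0),
                div_le_div_iff₀ (by positivity) (mul_pos hrm1 (by linarith : (0:ℝ) < r))]
              nlinarith
            have hmul : (1/Real.sqrt r)*(1/r^2) ≤ (1/Real.sqrt (M*s))*(1/(r-1) - 1/r) :=
              mul_le_mul h2 h3 (by positivity) (by positivity)
            calc (2*t)^2/(((q:ℝ)*Real.sqrt (q:ℝ))*(r^2*Real.sqrt r)) ≤
                (2*t)^2/((t*Real.sqrt t)*(r^2*Real.sqrt r)) := hstep1
              _ = 4*Real.sqrt t * (1/(r^2*Real.sqrt r)) := heq1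
              _ = 4*Real.sqrt t * ((1/Real.sqrt r)*(1/r^2)) := by rw [hx1]
              _ ≤ 4*Real.sqrt t * ((1/Real.sqrt (M*s))*(1/(r-1) - 1/r)) :=
                  mul_le_mul_of_nonneg_left hmul (by positivity)
              _ = 4*Real.sqrt t/Real.sqrt (M*s) * (1/(r-1) - 1/r) := by ring
          linarith
      -- sum the bound and telescope
      have hsum : (∑ q ∈ Finset.Icc ((L:ℤ)+1) N,
          (2 * t) ^ 2 / ((q : ℝ) ^ ((3 : ℝ) / 2) * (2 * t - (q : ℝ)) ^ ((5 : ℝ) / 2))) ≤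
          8/Real.sqrt t * (Gfun ((L:ℤ)+1-1) - Gfun N) +
            4*Real.sqrt t/Real.sqrt (M*s) * (Hfun t N - Hfun t ((L:ℤ)+1-1)) := by
        calc (∑ q ∈ Finset.Icc ((L:ℤ)+1) N,
            (2 * t) ^ 2 / ((q : ℝ) ^ ((3 : ℝ) / 2) * (2 * t - (q : ℝ)) ^ ((5 : ℝ) / 2)))
            ≤ ∑ q ∈ Finset.Icc ((L:ℤ)+1) N,
              (8/Real.sqrt t * (Gfun (q-1) - Gfun q) +
                4*Real.sqrt t/Real.sqrt (M*s) * (Hfun t q - Hfun t (q-1))) :=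
              Finset.sum_le_sum key
          _ = 8/Real.sqrt t * (∑ q ∈ Finset.Icc ((L:ℤ)+1) N, (Gfun (q-1) - Gfun q)) +
              4*Real.sqrt t/Real.sqrt (M*s) *
                (∑ q ∈ Finset.Icc ((L:ℤ)+1) N, (Hfun t q - Hfun t (q-1))) := by
              rw [Finset.sum_add_distrib, Finset.mul_sum, Finset.mul_sum]
          _ = 8/Real.sqrt t * (Gfun ((L:ℤ)+1-1) - Gfun N) +
              4*Real.sqrt t/Real.sqrt (M*s) * (Hfun t N - Hfun t ((L:ℤ)+1-1)) := by
              rw [sum_tele Gfun ((L:ℤ)+1) N hge, sum_tele' (Hfun t) ((L:ℤ)+1) N hge]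
      have hL0 : ((L:ℤ)+1-1 : ℤ) = (L:ℤ) := by ring
      have hGL : Gfun ((L:ℤ)+1-1) ≤ 1 := by
        rw [hL0]; simp only [Gfun]
        have h1 : (1:ℝ) ≤ Real.sqrt ((L:ℤ):ℝ) := Real.one_le_sqrt.mpr (by push_cast; linarith)
        calc (1:ℝ)/Real.sqrt ((L:ℤ):ℝ) ≤ 1/1 := one_div_le_one_div_of_le one_pos h1
          _ = 1 := by norm_num
      have hGN : 0 ≤ Gfun N := by simp only [Gfun]; positivity
      have hHL : 0 ≤ Hfun t ((L:ℤ)+1-1) := by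
        rw [hL0]; simp only [Hfun]
        apply div_nonneg zero_le_one
        push_cast; linarith
      have hHN : Hfun t N ≤ 1/(M*s) := by
        simp only [Hfun]
        exact one_div_le_one_div_of_le hMs0 (by linarith)
      -- the two final numeric bounds
      have hst : 16/ε ≤ Real.sqrt t := by
        apply (Real.le_sqrt (by positivity) ht0.le).mpr
        rw [div_pow]
        norm_num
        linarith
      have h8 : 8/Real.sqrt t ≤ ε/2 := by
        rw [div_le_iff₀ hsqt0]
        have hεe : ε * (16/ε) = 16 := by field_simp
        nlinarith [mul_le_mul_of_nonneg_left hst (by positivity : (0:ℝ) ≤ ε/2)]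
      have h4M : (4:ℝ)/M ≤ ε/2 := by
        rw [div_le_iff₀ hM0]
        have hεe : ε * (8/ε) = 8 := by field_simp
        nlinarith [mul_le_mul_of_nonneg_left hMε (by positivity : (0:ℝ) ≤ ε/2)]
      have hcM : 4*Real.sqrt t/Real.sqrt (M*s) * (1/(M*s)) ≤ 4/M := by
        have hsqrtMs : 0 < Real.sqrt (M*s) := Real.sqrt_pos.mpr hMs0
        have hstle : Real.sqrt t ≤ Real.sqrt (M*s) * s := by
          rw [Real.sqrt_mul hM0.le, ← hsqs]
          have h1M : 1 ≤ Real.sqrt M := Real.one_le_sqrt.mpr hM1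
          nlinarith [Real.sqrt_nonneg s, hs0]
        rw [div_mul_div_comm, div_le_div_iff₀ (mul_pos hsqrtMs hMs0) hM0]
        nlinarith [mul_le_mul_of_nonneg_left hstle (by positivity : (0:ℝ) ≤ 4*M)]
      -- put everything together
      have hB : 4*Real.sqrt t/Real.sqrt (M*s) * (Hfun t N - Hfun t ((L:ℤ)+1-1)) ≤
          4*Real.sqrt t/Real.sqrt (M*s) * (1/(M*s)) := by
        apply mul_le_mul_of_nonneg_left (by linarith) (by positivity)
      have hA : 8/Real.sqrt t * (Gfun ((L:ℤ)+1-1) - Gfun N) ≤ 8/Real.sqrt t * 1 := by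
        apply mul_le_mul_of_nonneg_left (by linarith) (by positivity)
      have := hsum
      linarith [hB, hA, hcM, h8, h4M]
  exact Filter.limsup_le_of_le (Filter.isCoboundedUnder_le_of_eventually_le atTop hnn) hev
end

section
/- Fix a real number M > 0. For every ε > 0 there exists L₀ such that for all integers L ≥ L₀, limsup_{t→∞} Σ_{q=L+1}^{⌊2t − M t^{1/3} − 1⌋} (2t)²/(q²(2t−q)²) ≤ ε; that is, lim_{L→∞} limsup_{t→∞} of this sum equals 0. -/
open MeasureTheory Filter Real

private lemma two_div_sq_le_aux (x : ℝ) (hx : 0 < x - 1) :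
    2 / x ^ 2 ≤ 2 / (x - 1) - 2 / x := by
  have hx0 : (0 : ℝ) < x := by linarith
  have h : 2 / (x - 1) - 2 / x = 2 / ((x - 1) * x) := by
    field_simp
    ring
  rw [h]
  exact div_le_div_of_nonneg_left (by norm_num) (by positivity) (by nlinarith)

private lemma Icc_int_insert_top (a b : ℤ) (h : a ≤ b + 1) :
    Finset.Icc a (b + 1) = insert (b + 1) (Finset.Icc a b) := by
  ext x
  simp only [Finset.mem_Icc, Finset.mem_insert]
  omega

private lemma telescope_sum_le (g f : ℤ → ℝ) (a : ℤ) :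
    ∀ b : ℤ, a - 1 ≤ b → (∀ q ∈ Finset.Icc a b, f q ≤ g (q - 1) - g q) →
      ∑ q ∈ Finset.Icc a b, f q ≤ g (a - 1) - g b := by
  refine Int.le_induction (motive := fun b _ => (∀ q ∈ Finset.Icc a b, f q ≤ g (q - 1) - g q) →
      ∑ q ∈ Finset.Icc a b, f q ≤ g (a - 1) - g b) ?_ ?_
  · intro _
    rw [Finset.Icc_eq_empty (by omega)]
    simp
  · intro k hk ih h
    rw [Icc_int_insert_top a k (by omega),
      Finset.sum_insert (by simp only [Finset.mem_Icc]; omega)]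
    have h1 := h (k + 1) (by simp only [Finset.mem_Icc]; omega)
    have h2 := ih (fun q hq => h q (by simp only [Finset.mem_Icc] at hq ⊢; omega))
    have hkk : (k : ℤ) + 1 - 1 = k := by ring
    rw [hkk] at h1
    linarith

private lemma eventual_bound (M ε t : ℝ) (hM : 0 < M) (hε : 0 < ε) (L : ℕ) (hL1 : 1 ≤ L)
    (ht1 : 1 ≤ t) (hMt : 4 / ε ≤ M * t ^ ((1 : ℝ) / 3)) (h2L : 2 / (L : ℝ) ≤ ε / 2) :
    ∑ q ∈ Finset.Icc ((L : ℤ) + 1) ⌊2 * t - M * t ^ ((1 : ℝ) / 3) - 1⌋,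
      (2 * t) ^ 2 / ((q : ℝ) ^ 2 * (2 * t - (q : ℝ)) ^ 2) ≤ ε := by
  have htpos : (0 : ℝ) < t := by linarith
  have hMtpos : (0 : ℝ) < M * t ^ ((1 : ℝ) / 3) := by
    have h4ε : (0 : ℝ) < 4 / ε := by positivity
    linarith
  obtain ⟨N, hN⟩ : ∃ N : ℤ, ⌊2 * t - M * t ^ ((1 : ℝ) / 3) - 1⌋ = N := ⟨_, rfl⟩
  have hNle : (N : ℝ) ≤ 2 * t - M * t ^ ((1 : ℝ) / 3) - 1 := hN ▸ Int.floor_le _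
  rw [hN]
  by_cases hNL : N < (L : ℤ) + 1
  · rw [Finset.Icc_eq_empty (by omega), Finset.sum_empty]
    linarith
  push_neg at hNL
  have hsN : M * t ^ ((1 : ℝ) / 3) ≤ 2 * t - (N : ℝ) - 1 := by linarith
  set g : ℤ → ℝ := fun q => 2 / (q : ℝ) - 2 / (2 * t - (q : ℝ) - 1) with hg
  have key : ∑ q ∈ Finset.Icc ((L : ℤ) + 1) N,
      (2 * t) ^ 2 / ((q : ℝ) ^ 2 * (2 * t - (q : ℝ)) ^ 2) ≤ g ((L : ℤ) + 1 - 1) - g N := by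
    apply telescope_sum_le g _ ((L : ℤ) + 1) N (by omega)
    intro q hq
    simp only [Finset.mem_Icc] at hq
    obtain ⟨hq1, hq2⟩ := hq
    have hqL : (L : ℝ) + 1 ≤ (q : ℝ) := by exact_mod_cast hq1
    have hqN : (q : ℝ) ≤ (N : ℝ) := by exact_mod_cast hq2
    have hq1R : (1 : ℝ) ≤ (q : ℝ) - 1 := by
      have : (1 : ℝ) ≤ (L : ℝ) := by exact_mod_cast hL1
      linarith
    have hqpos : (0 : ℝ) < (q : ℝ) := by linarith
    have hqm1 : (0 : ℝ) < (q : ℝ) - 1 := by linarith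
    have hsq : M * t ^ ((1 : ℝ) / 3) ≤ 2 * t - (q : ℝ) - 1 := by linarith
    have hsqpos : (0 : ℝ) < 2 * t - (q : ℝ) - 1 := by linarith
    have hsqpos' : (0 : ℝ) < 2 * t - (q : ℝ) := by linarith
    have e1 : (2 * t) ^ 2 / ((q : ℝ) ^ 2 * (2 * t - (q : ℝ)) ^ 2)
        = (1 / (q : ℝ) + 1 / (2 * t - (q : ℝ))) ^ 2 := by
      field_simp
      ring
    have e2 : (1 / (q : ℝ) + 1 / (2 * t - (q : ℝ))) ^ 2
        ≤ 2 / (q : ℝ) ^ 2 + 2 / (2 * t - (q : ℝ)) ^ 2 := by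
      have hx : 2 / (q : ℝ) ^ 2 = 2 * (1 / (q : ℝ)) ^ 2 := by
        rw [div_pow, one_pow]; ring
      have hy : 2 / (2 * t - (q : ℝ)) ^ 2 = 2 * (1 / (2 * t - (q : ℝ))) ^ 2 := by
        rw [div_pow, one_pow]; ring
      rw [hx, hy]
      nlinarith [sq_nonneg (1 / (q : ℝ) - 1 / (2 * t - (q : ℝ)))]
    have e3 : 2 / (q : ℝ) ^ 2 ≤ 2 / ((q : ℝ) - 1) - 2 / (q : ℝ) :=
      two_div_sq_le_aux _ (by linarith)
    have e4 : 2 / (2 * t - (q : ℝ)) ^ 2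
        ≤ 2 / (2 * t - (q : ℝ) - 1) - 2 / (2 * t - (q : ℝ)) :=
      two_div_sq_le_aux _ (by linarith)
    have egq : g (q - 1) - g q
        = (2 / ((q : ℝ) - 1) - 2 / (q : ℝ))
          + (2 / (2 * t - (q : ℝ) - 1) - 2 / (2 * t - (q : ℝ))) := by
      simp only [hg]
      push_cast
      ring
    rw [e1, egq]
    linarith
  have hLN : (L : ℝ) + 1 ≤ (N : ℝ) := by exact_mod_cast hNL
  have hLpos : (0 : ℝ) < (L : ℝ) := by
    have : (1 : ℝ) ≤ (L : ℝ) := by exact_mod_cast hL1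
    linarith
  have hgL : g ((L : ℤ) + 1 - 1) ≤ 2 / (L : ℝ) := by
    have hLL : ((L : ℤ) + 1 - 1 : ℤ) = (L : ℤ) := by ring
    rw [hLL]
    simp only [hg]
    push_cast
    have hsL : (0 : ℝ) < 2 * t - (L : ℝ) - 1 := by linarith
    have h0 : (0 : ℝ) ≤ 2 / (2 * t - (L : ℝ) - 1) := by positivity
    linarith
  have hgN : -g N ≤ 2 / (M * t ^ ((1 : ℝ) / 3)) := by
    simp only [hg]
    have hNpos : (0 : ℝ) < (N : ℝ) := by linarith
    have h1 : (0 : ℝ) ≤ 2 / (N : ℝ) := by positivity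
    have h2 : 2 / (2 * t - (N : ℝ) - 1) ≤ 2 / (M * t ^ ((1 : ℝ) / 3)) :=
      div_le_div_of_nonneg_left (by norm_num) hMtpos hsN
    linarith
  have hMt2 : 2 / (M * t ^ ((1 : ℝ) / 3)) ≤ ε / 2 := by
    rw [div_le_div_iff₀ hMtpos (by norm_num)]
    rw [div_le_iff₀ hε] at hMt
    linarith
  linarith

/-- Lemma 3.7, second limit: for fixed `M > 0`,
`lim_{L→∞} limsup_{t→∞} Σ_{q=L+1}^{⌊2t - Mt^{1/3} - 1⌋} (2t)²/(q²(2t-q)²) = 0`. -/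
theorem sum_q_square_vanishes (M : ℝ) (hM : 0 < M) :
    ∀ ε : ℝ, 0 < ε → ∃ L₀ : ℕ, ∀ L : ℕ, L₀ ≤ L → 1 ≤ L →
      Filter.limsup (fun t : ℝ =>
          ∑ q ∈ Finset.Icc ((L : ℤ) + 1) ⌊2 * t - M * t ^ ((1 : ℝ) / 3) - 1⌋,
            (2 * t) ^ 2 / ((q : ℝ) ^ 2 * (2 * t - (q : ℝ)) ^ 2))
        atTop ≤ ε := by
  intro ε hε
  obtain ⟨L₀, hL₀⟩ := exists_nat_ge ((4 : ℝ) / ε)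
  refine ⟨max 1 L₀, fun L hL hL1 => ?_⟩
  have hLε : (4 : ℝ) / ε ≤ L := le_trans hL₀ (by exact_mod_cast le_trans (le_max_right 1 L₀) hL)
  have hLpos : (0 : ℝ) < L := by positivity
  have h2L : 2 / (L : ℝ) ≤ ε / 2 := by
    rw [div_le_div_iff₀ hLpos (by norm_num)]
    rw [div_le_iff₀ hε] at hLε
    linarith
  have hev : ∀ᶠ t in atTop, (∑ q ∈ Finset.Icc ((L : ℤ) + 1) ⌊2 * t - M * t ^ ((1 : ℝ) / 3) - 1⌋,
      (2 * t) ^ 2 / ((q : ℝ) ^ 2 * (2 * t - (q : ℝ)) ^ 2)) ≤ ε := by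
    rw [eventually_atTop]
    refine ⟨max 1 ((4 / (M * ε)) ^ (3 : ℕ)), fun t ht => ?_⟩
    have ht1 : (1 : ℝ) ≤ t := le_trans (le_max_left _ _) ht
    have hMε : (0 : ℝ) < 4 / (M * ε) := by positivity
    have hcube : 4 / (M * ε) ≤ t ^ ((1 : ℝ) / 3) := by
      have h1 : ((4 / (M * ε)) ^ (3 : ℕ)) ^ ((1 : ℝ) / 3) = 4 / (M * ε) := by
        rw [← Real.rpow_natCast (4 / (M * ε)) 3, ← Real.rpow_mul (le_of_lt hMε)]
        norm_num
      calc 4 / (M * ε) = ((4 / (M * ε)) ^ (3 : ℕ)) ^ ((1 : ℝ) / 3) := h1.symm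
        _ ≤ t ^ ((1 : ℝ) / 3) := by
            apply Real.rpow_le_rpow (by positivity) (le_trans (le_max_right _ _) ht)
            norm_num
    have hMt : 4 / ε ≤ M * t ^ ((1 : ℝ) / 3) := by
      have h := mul_le_mul_of_nonneg_left hcube (le_of_lt hM)
      rw [mul_div_assoc'] at h
      calc 4 / ε = M * 4 / (M * ε) := by
            field_simp
        _ ≤ M * t ^ ((1 : ℝ) / 3) := h
    exact eventual_bound M ε t hM hε L hL1 ht1 hMt h2L
  apply Filter.limsup_le_of_le _ hev
  apply Filter.isCoboundedUnder_le_of_le atTop (x := 0)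
  intro t
  apply Finset.sum_nonneg
  intro q _
  positivity
end

section
/- Let a ≤ b be integers and let s be a positive differentiable function on the interval [a−1, b+1]. Suppose there exists c ∈ (a, b) such that s'(x) < 0 for all x ∈ [a−1, c) and s'(x) > 0 for all x ∈ (c, b+1]. Then Σ_{q=a}^{b} s(q) ≤ ∫_{a−1}^{b+1} s(x) dx. -/
open MeasureTheory Filter Real intervalIntegral

lemma tele_aux (f : ℝ → ℝ) (a : ℤ) :
    ∀ m : ℤ, a - 1 ≤ m →
    (∀ q ∈ Finset.Icc a m, IntervalIntegrable f volume ((q : ℝ) - 1) (q : ℝ)) →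
    IntervalIntegrable f volume ((a : ℝ) - 1) (m : ℝ) ∧
      ∑ q ∈ Finset.Icc a m, (∫ x in ((q : ℝ) - 1)..(q : ℝ), f x)
        = ∫ x in ((a : ℝ) - 1)..(m : ℝ), f x := by
  refine Int.le_induction ?_ ?_
  · intro _
    constructor
    · push_cast; simp
    · have : Finset.Icc a (a - 1) = ∅ := by
        apply Finset.Icc_eq_empty; omega
      rw [this]
      push_cast
      simp
  · intro n hn ih hInt
    have hpieces : ∀ q ∈ Finset.Icc a n, IntervalIntegrable f volume ((q : ℝ) - 1) (q : ℝ) := by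
      intro q hq
      apply hInt
      simp only [Finset.mem_Icc] at hq ⊢; omega
    obtain ⟨H1, H2⟩ := ih hpieces
    have hnew : IntervalIntegrable f volume ((n : ℝ)) ((n : ℝ) + 1) := by
      have := hInt (n + 1) (by simp [Finset.mem_Icc]; omega)
      push_cast at this
      simpa using this
    have hIcc : Finset.Icc a (n + 1) = insert (n + 1) (Finset.Icc a n) := by
      ext x; simp [Finset.mem_Icc]; omega
    constructor
    · push_cast
      exact H1.trans hnew
    · rw [hIcc, Finset.sum_insert (by simp [Finset.mem_Icc])]
      push_cast
      rw [show ((n : ℝ) + 1 - 1) = (n : ℝ) by ring]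
      rw [H2, add_comm]
      exact intervalIntegral.integral_add_adjacent_intervals H1 hnew

/-- The sum–integral comparison (3.54): if `s` is positive and differentiable on
`[a-1, b+1]`, decreasing on `[a-1, c)` and increasing on `(c, b+1]` for some
`c ∈ (a, b)`, then `Σ_{q=a}^b s(q) ≤ ∫_{a-1}^{b+1} s(x) dx`. -/
theorem sum_le_integral_of_unimodal
    (a b : ℤ) (hab : a ≤ b) (s : ℝ → ℝ)
    (hpos : ∀ x ∈ Set.Icc ((a : ℝ) - 1) ((b : ℝ) + 1), 0 < s x)
    (hdiff : ∀ x ∈ Set.Icc ((a : ℝ) - 1) ((b : ℝ) + 1), DifferentiableAt ℝ s x)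
    (c : ℝ) (hc : c ∈ Set.Ioo (a : ℝ) (b : ℝ))
    (hdec : ∀ x ∈ Set.Ico ((a : ℝ) - 1) c, deriv s x < 0)
    (hinc : ∀ x ∈ Set.Ioc c ((b : ℝ) + 1), 0 < deriv s x) :
    ∑ q ∈ Finset.Icc a b, s (q : ℝ) ≤ ∫ x in ((a : ℝ) - 1)..((b : ℝ) + 1), s x := by
  obtain ⟨hac, hcb⟩ := hc
  set m : ℤ := ⌊c⌋ with hm
  have ham : a ≤ m := Int.le_floor.mpr (le_of_lt hac)
  have hmb : m + 1 ≤ b := by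
    have : m < b := Int.floor_lt.mpr hcb
    omega
  have hmc : (m : ℝ) ≤ c := Int.floor_le c
  have hcm1 : c < (m : ℝ) + 1 := Int.lt_floor_add_one c
  have hamR : (a : ℝ) ≤ (m : ℝ) := by exact_mod_cast ham
  have hmbR : (m : ℝ) + 1 ≤ (b : ℝ) := by exact_mod_cast hmb
  have hcont : ContinuousOn s (Set.Icc ((a : ℝ) - 1) ((b : ℝ) + 1)) :=
    fun x hx => (hdiff x hx).continuousAt.continuousWithinAt
  have hIntg : ∀ u v : ℝ, (a : ℝ) - 1 ≤ u → u ≤ v → v ≤ (b : ℝ) + 1 →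
      IntervalIntegrable s volume u v := by
    intro u v h1 h2 h3
    apply (hcont.mono ?_).intervalIntegrable
    rw [Set.uIcc_of_le h2]
    exact Set.Icc_subset_Icc h1 h3
  -- monotonicity
  have hsub1 : Set.Icc ((a : ℝ) - 1) c ⊆ Set.Icc ((a : ℝ) - 1) ((b : ℝ) + 1) :=
    Set.Icc_subset_Icc le_rfl (by linarith)
  have hsub2 : Set.Icc c ((b : ℝ) + 1) ⊆ Set.Icc ((a : ℝ) - 1) ((b : ℝ) + 1) :=
    Set.Icc_subset_Icc (by linarith) le_rfl
  have hanti : StrictAntiOn s (Set.Icc ((a : ℝ) - 1) c) := by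
    apply strictAntiOn_of_deriv_neg (convex_Icc _ _) (hcont.mono hsub1)
    intro x hx
    rw [interior_Icc] at hx
    exact hdec x ⟨le_of_lt hx.1, hx.2⟩
  have hmono : StrictMonoOn s (Set.Icc c ((b : ℝ) + 1)) := by
    apply strictMonoOn_of_deriv_pos (convex_Icc _ _) (hcont.mono hsub2)
    intro x hx
    rw [interior_Icc] at hx
    exact hinc x ⟨hx.1, le_of_lt hx.2⟩
  -- pointwise bounds
  have key1 : ∀ q ∈ Finset.Icc a m, s (q : ℝ) ≤ ∫ x in ((q : ℝ) - 1)..(q : ℝ), s x := by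
    intro q hq
    rw [Finset.mem_Icc] at hq
    have hqa : (a : ℝ) ≤ (q : ℝ) := by exact_mod_cast hq.1
    have hqm : (q : ℝ) ≤ (m : ℝ) := by exact_mod_cast hq.2
    have h1 : (q : ℝ) - 1 ≤ (q : ℝ) := by linarith
    have hqmem : (q : ℝ) ∈ Set.Icc ((a : ℝ) - 1) c := ⟨by linarith, by linarith⟩
    calc s (q : ℝ) = ∫ _ in ((q : ℝ) - 1)..(q : ℝ), s (q : ℝ) := by simp
      _ ≤ ∫ x in ((q : ℝ) - 1)..(q : ℝ), s x := by
          apply intervalIntegral.integral_mono_on h1 _root_.intervalIntegrable_const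
            (hIntg _ _ (by linarith) h1 (by linarith))
          intro x hx
          have hxmem : x ∈ Set.Icc ((a : ℝ) - 1) c := ⟨by linarith [hx.1], by linarith [hx.2]⟩
          rcases lt_or_eq_of_le hx.2 with h | h
          · exact le_of_lt (hanti hxmem hqmem h)
          · rw [h]
  have key2 : ∀ q ∈ Finset.Icc (m + 1) b, s (q : ℝ) ≤ ∫ x in (q : ℝ)..((q : ℝ) + 1), s x := by
    intro q hq
    rw [Finset.mem_Icc] at hq
    have hqm : (m : ℝ) + 1 ≤ (q : ℝ) := by exact_mod_cast hq.1
    have hqb : (q : ℝ) ≤ (b : ℝ) := by exact_mod_cast hq.2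
    have h1 : (q : ℝ) ≤ (q : ℝ) + 1 := by linarith
    have hqmem : (q : ℝ) ∈ Set.Icc c ((b : ℝ) + 1) := ⟨by linarith, by linarith⟩
    calc s (q : ℝ) = ∫ _ in (q : ℝ)..((q : ℝ) + 1), s (q : ℝ) := by simp
      _ ≤ ∫ x in (q : ℝ)..((q : ℝ) + 1), s x := by
          apply intervalIntegral.integral_mono_on h1 _root_.intervalIntegrable_const
            (hIntg _ _ (by linarith) h1 (by linarith))
          intro x hx
          have hxmem : x ∈ Set.Icc c ((b : ℝ) + 1) := ⟨by linarith [hx.1], by linarith [hx.2]⟩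
          rcases lt_or_eq_of_le hx.1 with h | h
          · exact le_of_lt (hmono hqmem hxmem h)
          · rw [← h]
  -- split the sum
  have hsplit : Finset.Icc a b = Finset.Icc a m ∪ Finset.Icc (m + 1) b := by
    ext x; simp [Finset.mem_Icc]; omega
  have hdisj : Disjoint (Finset.Icc a m) (Finset.Icc (m + 1) b) := by
    rw [Finset.disjoint_left]
    intro x hx hx'
    rw [Finset.mem_Icc] at hx hx'
    omega
  -- telescoping identities
  have htele1 := tele_aux s a m (by omega) (fun q hq => by
    rw [Finset.mem_Icc] at hq
    have : (q : ℝ) ≤ (m : ℝ) := by exact_mod_cast hq.2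
    have : (a : ℝ) ≤ (q : ℝ) := by exact_mod_cast hq.1
    exact hIntg _ _ (by linarith) (by linarith) (by linarith))
  have htele2 := tele_aux s (m + 2) (b + 1) (by omega) (fun q hq => by
    rw [Finset.mem_Icc] at hq
    have : (q : ℝ) ≤ (b : ℝ) + 1 := by exact_mod_cast hq.2
    have : ((m : ℝ) + 2) ≤ (q : ℝ) := by exact_mod_cast hq.1
    exact hIntg _ _ (by linarith) (by linarith) (by linarith))
  have hshift : ∑ q ∈ Finset.Icc (m + 1) b, (∫ x in (q : ℝ)..((q : ℝ) + 1), s x)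
      = ∑ q ∈ Finset.Icc (m + 2) (b + 1), (∫ x in ((q : ℝ) - 1)..(q : ℝ), s x) := by
    rw [show Finset.Icc (m + 2) (b + 1) = Finset.map (addRightEmbedding 1)
      (Finset.Icc (m + 1) b) by
        rw [Finset.map_add_right_Icc]; ring_nf]
    rw [Finset.sum_map]
    simp only [addRightEmbedding_apply]
    apply Finset.sum_congr rfl
    intro q _
    push_cast
    norm_num
  -- combine
  have hbound : ∑ q ∈ Finset.Icc a b, s (q : ℝ)
      ≤ (∫ x in ((a : ℝ) - 1)..(m : ℝ), s x) + ∫ x in ((m : ℝ) + 1)..((b : ℝ) + 1), s x := by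
    rw [hsplit, Finset.sum_union hdisj]
    apply add_le_add
    · calc ∑ q ∈ Finset.Icc a m, s (q : ℝ)
          ≤ ∑ q ∈ Finset.Icc a m, ∫ x in ((q : ℝ) - 1)..(q : ℝ), s x :=
            Finset.sum_le_sum key1
        _ = _ := htele1.2
    · calc ∑ q ∈ Finset.Icc (m + 1) b, s (q : ℝ)
          ≤ ∑ q ∈ Finset.Icc (m + 1) b, ∫ x in (q : ℝ)..((q : ℝ) + 1), s x :=
            Finset.sum_le_sum key2
        _ = ∫ x in ((m : ℝ) + 1)..((b : ℝ) + 1), s x := by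
            rw [hshift, htele2.2]
            have e1 : ((m + 2 : ℤ) : ℝ) - 1 = (m : ℝ) + 1 := by push_cast; ring
            have e2 : ((b + 1 : ℤ) : ℝ) = (b : ℝ) + 1 := by push_cast; ring
            rw [e1, e2]
  have hmid : 0 ≤ ∫ x in (m : ℝ)..((m : ℝ) + 1), s x := by
    apply intervalIntegral.integral_nonneg (by linarith)
    intro x hx
    exact le_of_lt (hpos x ⟨by linarith [hx.1], by linarith [hx.2]⟩)
  have hI1 : IntervalIntegrable s volume ((a : ℝ) - 1) (m : ℝ) :=
    hIntg _ _ le_rfl (by linarith) (by linarith)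
  have hI2 : IntervalIntegrable s volume (m : ℝ) ((m : ℝ) + 1) :=
    hIntg _ _ (by linarith) (by linarith) (by linarith)
  have hI3 : IntervalIntegrable s volume ((m : ℝ) + 1) ((b : ℝ) + 1) :=
    hIntg _ _ (by linarith) (by linarith) (by linarith)
  have htotal : (∫ x in ((a : ℝ) - 1)..(m : ℝ), s x) + (∫ x in (m : ℝ)..((m : ℝ) + 1), s x)
      + (∫ x in ((m : ℝ) + 1)..((b : ℝ) + 1), s x) = ∫ x in ((a : ℝ) - 1)..((b : ℝ) + 1), s x := by
    rw [intervalIntegral.integral_add_adjacent_intervals hI1 hI2]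
    exact intervalIntegral.integral_add_adjacent_intervals (hI1.trans hI2) hI3
  linarith
end
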